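/- arXiv:2402.18703 — 2 statements merged into one kernel-verified Lean document; each statement's English description precedes it below -/
import Mathlib

section
/- Let A ∈ M_d(ℝ) be column stochastic. (i) For any CDUC channel Φ_{A,B} on M_d(ℂ): Φ_{A,B} is mixing if and only if A is mixing. (ii) For any DUC channel Φ_{A,C} on M_d(ℂ): Φ_{A,C} is mixing if and only if A is mixing. -/
open Matrix Filter
open scoped ComplexOrder

/-- The algebra of `n × n` complex matrices. -/
abbrev Mat (n : ℕ) := Matrix (Fin n) (Fin n) ℂ

/-- A linear map between matrix algebras is a quantum channel if it admits a Kraus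
representation `Φ(X) = ∑ i, K i * X * (K i)ᴴ` with `∑ i, (K i)ᴴ * K i = 1`. -/
def IsChannel {m n : ℕ} (Φ : Matrix (Fin m) (Fin m) ℂ →ₗ[ℂ] Mat n) : Prop :=
  ∃ (p : ℕ) (K : Fin p → Matrix (Fin n) (Fin m) ℂ),
    (∀ X, Φ X = ∑ i, K i * X * (K i)ᴴ) ∧ ∑ i, (K i)ᴴ * K i = 1

/-- A quantum state: positive semidefinite with unit trace. -/
def IsState {n : ℕ} (ρ : Mat n) : Prop := ρ.PosSemidef ∧ ρ.trace = 1

/-- The rank-one matrix `|ψ⟩⟨ψ|`. -/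
def pureState {ι : Type*} (ψ : ι → ℂ) : Matrix ι ι ℂ :=
  Matrix.of fun i j => ψ i * star (ψ j)

/-- `ψ` is a unit vector. -/
def IsUnitVec {ι : Type*} [Fintype ι] (ψ : ι → ℂ) : Prop :=
  ∑ i, star (ψ i) * ψ i = 1

/-- c-scrambling: outputs of orthogonal pure states are never orthogonal. -/
def CScrambling {n : ℕ} (Φ : Mat n →ₗ[ℂ] Mat n) : Prop :=
  ∀ ψ φ : Fin n → ℂ, IsUnitVec ψ → IsUnitVec φ → ∑ i, star (ψ i) * φ i = 0 →
    0 < (Φ (pureState ψ) * Φ (pureState φ)).trace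

/-- A subspace `C ⊆ ℂ^n` is correctable for `Φ`. -/
def Correctable {n : ℕ} (Φ : Mat n →ₗ[ℂ] Mat n) (C : Submodule ℂ (Fin n → ℂ)) : Prop :=
  ∃ R : Mat n →ₗ[ℂ] Mat n, IsChannel R ∧
    ∀ ρ : Mat n, IsState ρ → LinearMap.range ρ.mulVecLin ≤ C → R (Φ ρ) = ρ

/-- q-scrambling: no correctable subspace of dimension ≥ 2. -/
def QScrambling {n : ℕ} (Φ : Mat n →ₗ[ℂ] Mat n) : Prop :=
  ∀ C : Submodule ℂ (Fin n → ℂ), Correctable Φ C → Module.finrank ℂ C ≤ 1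

/-- Apply `Φ` to the first tensor factor: `(Φ ⊗ id) M`. -/
def tensorId {d₀ n d₁ : ℕ} (Φ : Matrix (Fin d₀) (Fin d₀) ℂ →ₗ[ℂ] Mat n)
    (M : Matrix (Fin d₀ × Fin d₁) (Fin d₀ × Fin d₁) ℂ) :
    Matrix (Fin n × Fin d₁) (Fin n × Fin d₁) ℂ :=
  Matrix.of fun p q => Φ (Matrix.of fun k l => M (k, p.2) (l, q.2)) p.1 q.1

/-- Vanishing one-shot zero-error entanglement-assisted classical capacity. -/
def VanishingC0E {n : ℕ} (Φ : Mat n →ₗ[ℂ] Mat n) : Prop :=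
  ∀ (d₀ d₁ : ℕ), 0 < d₀ → 0 < d₁ → ∀ ψ : Fin d₀ × Fin d₁ → ℂ, IsUnitVec ψ →
    ∀ E₁ E₂ : Matrix (Fin d₀) (Fin d₀) ℂ →ₗ[ℂ] Mat n, IsChannel E₁ → IsChannel E₂ →
      0 < (tensorId (Φ ∘ₗ E₁) (pureState ψ) * tensorId (Φ ∘ₗ E₂) (pureState ψ)).trace

/-- Mixing channel: `Φ^n X → Tr(X) ρ⋆` entrywise. -/
def Mixing {n : ℕ} (Φ : Module.End ℂ (Mat n)) : Prop :=
  ∃ ρ : Mat n, IsState ρ ∧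
    ∀ X : Mat n, Tendsto (fun k => (Φ ^ k) X) atTop (nhds (X.trace • ρ))

/-- Strictly positive channel: every state is sent to a positive definite matrix. -/
def StrictlyPositive {n : ℕ} (Φ : Mat n →ₗ[ℂ] Mat n) : Prop :=
  ∀ ρ : Mat n, IsState ρ → (Φ ρ).PosDef

/-- Primitive channel: mixing with positive definite invariant state. -/
def Primitive {n : ℕ} (Φ : Module.End ℂ (Mat n)) : Prop :=
  ∃ ρ : Mat n, IsState ρ ∧ ρ.PosDef ∧
    ∀ X : Mat n, Tendsto (fun k => (Φ ^ k) X) atTop (nhds (X.trace • ρ))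

/-- Classical scrambling time `c(Φ)`. -/
noncomputable def cTime {n : ℕ} (Φ : Module.End ℂ (Mat n)) : ℕ∞ :=
  sInf {N : ℕ∞ | ∃ k : ℕ, N = k ∧ 1 ≤ k ∧ CScrambling (Φ ^ k)}

/-- Quantum scrambling time `q(Φ)`. -/
noncomputable def qTime {n : ℕ} (Φ : Module.End ℂ (Mat n)) : ℕ∞ :=
  sInf {N : ℕ∞ | ∃ k : ℕ, N = k ∧ 1 ≤ k ∧ QScrambling (Φ ^ k)}

/-- Entanglement-assisted classical scrambling time `c_E(Φ)`. -/
noncomputable def cETime {n : ℕ} (Φ : Module.End ℂ (Mat n)) : ℕ∞ :=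
  sInf {N : ℕ∞ | ∃ k : ℕ, N = k ∧ 1 ≤ k ∧ VanishingC0E (Φ ^ k)}

/-- Wielandt index `w(Φ)`. -/
noncomputable def wTime {n : ℕ} (Φ : Module.End ℂ (Mat n)) : ℕ∞ :=
  sInf {N : ℕ∞ | ∃ k : ℕ, N = k ∧ 1 ≤ k ∧ StrictlyPositive (Φ ^ k)}

/-- `M(Φ)`: the maximal size of a zero-error classical code for `Φ`. -/
noncomputable def Mclassical {n : ℕ} (Φ : Mat n →ₗ[ℂ] Mat n) : ℕ :=
  sSup {M : ℕ | ∃ ψ : Fin M → Fin n → ℂ, (∀ m, IsUnitVec (ψ m)) ∧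
    ∀ m m', m ≠ m' → (Φ (pureState (ψ m)) * Φ (pureState (ψ m'))).trace = 0}

/-- `D(Φ)`: the maximal dimension of a correctable subspace for `Φ`. -/
noncomputable def Dquantum {n : ℕ} (Φ : Mat n →ₗ[ℂ] Mat n) : ℕ :=
  sSup {M : ℕ | ∃ C : Submodule ℂ (Fin n → ℂ), Correctable Φ C ∧ Module.finrank ℂ C = M}

/-- `M_E(Φ)`: the maximal size of an entanglement-assisted zero-error classical code. -/
noncomputable def MEclassical {n : ℕ} (Φ : Mat n →ₗ[ℂ] Mat n) : ℕ :=
  sSup {M : ℕ | ∃ (d₀ d₁ : ℕ) (ψ : Fin d₀ × Fin d₁ → ℂ), 0 < d₀ ∧ 0 < d₁ ∧ IsUnitVec ψ ∧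
    ∃ E : Fin M → (Matrix (Fin d₀) (Fin d₀) ℂ →ₗ[ℂ] Mat n),
      (∀ m, IsChannel (E m)) ∧
      ∀ m m', m ≠ m' →
        (tensorId (Φ ∘ₗ E m) (pureState ψ) * tensorId (Φ ∘ₗ E m') (pureState ψ)).trace = 0}

/-- The ordered product `K_{i 0} ⋯ K_{i (n-1)}` of Kraus operators. -/
noncomputable def krausProd {d p : ℕ} (K : Fin p → Mat d) {n : ℕ} (i : Fin n → Fin p) : Mat d :=
  (List.ofFn fun t => K (i t)).prod

/-- The operator system of `Φ^n`, for `Φ` with Kraus operators `K`. -/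
noncomputable def opSys {d p : ℕ} (K : Fin p → Mat d) (n : ℕ) : Submodule ℂ (Mat d) :=
  Submodule.span ℂ {X | ∃ i j : Fin n → Fin p, X = (krausProd K i)ᴴ * krausProd K j}

/-- `𝒦_n(Φ)`: the span of `n`-fold products of Kraus operators. -/
noncomputable def kSpan {d p : ℕ} (K : Fin p → Mat d) (n : ℕ) : Submodule ℂ (Mat d) :=
  Submodule.span ℂ {X | ∃ i : Fin n → Fin p, X = krausProd K i}

/-- `A` is column stochastic. -/
def ColumnStochastic {d : ℕ} (A : Matrix (Fin d) (Fin d) ℝ) : Prop :=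
  (∀ i j, 0 ≤ A i j) ∧ ∀ j, ∑ i, A i j = 1

/-- The CDUC map `Φ_{A,B}(X) = ∑ᵢⱼ A i j * X j j |i⟩⟨i| + ∑_{i≠j} B i j * X i j |i⟩⟨j|`. -/
noncomputable def cducMap {d : ℕ} (A : Matrix (Fin d) (Fin d) ℝ) (B : Mat d) :
    Mat d →ₗ[ℂ] Mat d where
  toFun X := Matrix.of fun i j =>
    if i = j then ∑ k, (A i k : ℂ) * X k k else B i j * X i j
  map_add' X Y := by
    ext i j
    by_cases h : i = j <;>
      simp [h, Matrix.add_apply, mul_add, Finset.sum_add_distrib]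
  map_smul' c X := by
    ext i j
    by_cases h : i = j <;>
      simp [h, Matrix.smul_apply, smul_eq_mul, Finset.mul_sum, mul_left_comm]

/-- The DUC map `Φ_{A,C}(X) = ∑ᵢⱼ A i j * X j j |i⟩⟨i| + ∑_{i≠j} C i j * X j i |i⟩⟨j|`. -/
noncomputable def ducMap {d : ℕ} (A : Matrix (Fin d) (Fin d) ℝ) (C : Mat d) :
    Mat d →ₗ[ℂ] Mat d where
  toFun X := Matrix.of fun i j =>
    if i = j then ∑ k, (A i k : ℂ) * X k k else C i j * X j i
  map_add' X Y := by
    ext i j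
    by_cases h : i = j <;>
      simp [h, Matrix.add_apply, mul_add, Finset.sum_add_distrib]
  map_smul' c X := by
    ext i j
    by_cases h : i = j <;>
      simp [h, Matrix.smul_apply, smul_eq_mul, Finset.mul_sum, mul_left_comm]

/-- The classical channel `Φ_A(X) = ∑ᵢⱼ A i j * X j j |i⟩⟨i|` of a stochastic matrix `A`. -/
noncomputable def classicalChannel {d : ℕ} (A : Matrix (Fin d) (Fin d) ℝ) :
    Mat d →ₗ[ℂ] Mat d :=
  cducMap A 0

/-- A stochastic matrix is scrambling if any two columns overlap in some row. -/
def MatScrambling {d : ℕ} (A : Matrix (Fin d) (Fin d) ℝ) : Prop :=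
  ∀ i j, ∃ k, 0 < A k i * A k j

/-- A matrix with strictly positive entries. -/
def MatStrictlyPositive {d : ℕ} (A : Matrix (Fin d) (Fin d) ℝ) : Prop :=
  ∀ i j, 0 < A i j

/-- A stochastic matrix is mixing if `1` is an eigenvalue of algebraic multiplicity one
and there is no other eigenvalue of modulus one. -/
def MatMixing {d : ℕ} (A : Matrix (Fin d) (Fin d) ℝ) : Prop :=
  Polynomial.rootMultiplicity 1 (Matrix.charpoly (A.map Complex.ofReal)) = 1 ∧
  ∀ μ : ℂ, ‖μ‖ = 1 → (Matrix.charpoly (A.map Complex.ofReal)).IsRoot μ → μ = 1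

/-- A stochastic matrix is primitive if it is mixing and its invariant probability
vector is entrywise strictly positive. -/
def MatPrimitive {d : ℕ} (A : Matrix (Fin d) (Fin d) ℝ) : Prop :=
  MatMixing A ∧
    ∀ v : Fin d → ℝ, (∀ i, 0 ≤ v i) → ∑ i, v i = 1 → A *ᵥ v = v → ∀ i, 0 < v i

/-- The scrambling time of a stochastic matrix. -/
noncomputable def cMat {d : ℕ} (A : Matrix (Fin d) (Fin d) ℝ) : ℕ∞ :=
  sInf {N : ℕ∞ | ∃ k : ℕ, N = k ∧ 1 ≤ k ∧ MatScrambling (A ^ k)}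

/-- The Wielandt index of a stochastic matrix. -/
noncomputable def wMat {d : ℕ} (A : Matrix (Fin d) (Fin d) ℝ) : ℕ∞ :=
  sInf {N : ℕ∞ | ∃ k : ℕ, N = k ∧ 1 ≤ k ∧ MatStrictlyPositive (A ^ k)}

/-- The matrix `A_d` from the paper (0-indexed). -/
noncomputable def Amat (d : ℕ) : Matrix (Fin d) (Fin d) ℝ :=
  Matrix.of fun i j =>
    if (i : ℕ) = d - 1 ∧ (j : ℕ) = 0 then 1
    else if (j : ℕ) = 1 ∧ ((i : ℕ) = 0 ∨ (i : ℕ) = d - 1) then 1 / 2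
    else if 2 ≤ (j : ℕ) ∧ (i : ℕ) + 1 = (j : ℕ) then 1
    else 0

namespace DUCAux

open Polynomial Module

variable {d : ℕ}



lemma eval_charpoly (M : Mat d) (μ : ℂ) :
    M.charpoly.eval μ = (Matrix.diagonal (fun _ => μ) - M).det := by
  rw [Matrix.charpoly, ← Polynomial.coe_evalRingHom, RingHom.map_det]
  congr 1
  ext i j
  by_cases h : i = j <;>
    simp [Matrix.charmatrix_apply, h, Matrix.diagonal_apply, Matrix.one_apply]

lemma isRoot_charpoly_iff {M : Mat d} {μ : ℂ} :
    M.charpoly.IsRoot μ ↔ ∃ v, v ≠ 0 ∧ M *ᵥ v = μ • v := by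
  rw [Polynomial.IsRoot, eval_charpoly, ← Matrix.exists_mulVec_eq_zero_iff]
  refine exists_congr fun v => and_congr_right fun _ => ?_
  rw [Matrix.sub_mulVec, sub_eq_zero]
  constructor
  · intro h; rw [← h]; funext i; simp [Matrix.mulVec_diagonal]
  · intro h; rw [h]; funext i; simp [Matrix.mulVec_diagonal]

lemma charpoly_mulVecLin (M : Mat d) : M.charpoly = LinearMap.charpoly (Matrix.mulVecLin M) := by
  rw [← LinearMap.charpoly_toMatrix (Matrix.mulVecLin M) (Pi.basisFun ℂ (Fin d))]
  congr 1
  ext i j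
  simp [LinearMap.toMatrix_apply, Matrix.mulVecLin_apply, Matrix.mulVec_single]

lemma maxGen_shift (φ : Module.End ℂ (Fin d → ℂ)) (μ : ℂ) :
    φ.maxGenEigenspace μ = (φ - μ • 1).maxGenEigenspace 0 := by
  ext x
  simp [Module.End.mem_maxGenEigenspace]

lemma mulVecLin_sub_smul_one (M : Mat d) (μ : ℂ) :
    Matrix.mulVecLin (M - μ • 1) = Matrix.mulVecLin M - μ • 1 := by
  refine LinearMap.ext fun v => ?_
  show (M - μ • 1) *ᵥ v = M *ᵥ v - (μ • 1 : Module.End ℂ (Fin d → ℂ)) v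
  rw [Matrix.sub_mulVec, Matrix.smul_mulVec, Matrix.one_mulVec]
  rfl

lemma rootMultiplicity_charpoly (M : Mat d) (μ : ℂ) :
    Polynomial.rootMultiplicity μ M.charpoly
      = finrank ℂ (Module.End.maxGenEigenspace (Matrix.mulVecLin M) μ) := by
  have hshift : (M - μ • 1).charpoly = M.charpoly.comp (X + C μ) := by
    rw [Matrix.charpoly, Matrix.charpoly]
    have h1 : charmatrix (M - μ • 1) =
        (Polynomial.aeval (X + C μ) : ℂ[X] →ₐ[ℂ] ℂ[X]).toRingHom.mapMatrix (charmatrix M) := by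
      ext i j : 2
      by_cases h : i = j <;>
        (simp [Matrix.charmatrix_apply, h, Matrix.diagonal_apply, Matrix.one_apply]; try ring)
    rw [h1, ← RingHom.map_det]
    simp only [AlgHom.toRingHom_eq_coe, RingHom.coe_coe]
    rw [Polynomial.aeval_def, Polynomial.algebraMap_eq]
    rfl
  rw [Polynomial.rootMultiplicity_eq_natTrailingDegree, ← hshift, charpoly_mulVecLin,
    ← LinearMap.finrank_maxGenEigenspace_zero_eq, mulVecLin_sub_smul_one,
    maxGen_shift (Matrix.mulVecLin M) μ]





lemma colsum (hA : ColumnStochastic A) (j : Fin d) :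
    ∑ i, (A.map Complex.ofReal) i j = 1 := by
  have : ∑ i, ((A i j : ℝ) : ℂ) = ((∑ i, A i j : ℝ) : ℂ) := by push_cast; rfl
  simp only [Matrix.map_apply, this, hA.2 j, Complex.ofReal_one]

lemma sum_mulVec_eq (hA : ColumnStochastic A) (v : Fin d → ℂ) :
    ∑ i, ((A.map Complex.ofReal) *ᵥ v) i = ∑ i, v i := by
  simp only [Matrix.mulVec, dotProduct]
  rw [Finset.sum_comm]
  refine Finset.sum_congr rfl fun j _ => ?_
  rw [← Finset.sum_mul, colsum hA, one_mul]

lemma sum_pow_mulVec_eq (hA : ColumnStochastic A) (n : ℕ) (v : Fin d → ℂ) :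
    ∑ i, (((A.map Complex.ofReal) ^ n) *ᵥ v) i = ∑ i, v i := by
  induction n with
  | zero => simp [Matrix.one_mulVec]
  | succ n ih =>
    rw [pow_succ', ← Matrix.mulVec_mulVec, sum_mulVec_eq hA, ih]

lemma norm_eig_le_one (hA : ColumnStochastic A) {μ : ℂ} {v : Fin d → ℂ} (hv : v ≠ 0)
    (heq : (A.map Complex.ofReal) *ᵥ v = μ • v) : ‖μ‖ ≤ 1 := by
  set S := ∑ i, ‖v i‖ with hS
  have hSpos : 0 < S := by
    obtain ⟨i, hi⟩ := Function.ne_iff.mp hv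
    exact Finset.sum_pos' (fun _ _ => norm_nonneg _) ⟨i, Finset.mem_univ i, norm_pos_iff.mpr hi⟩
  have hle : ‖μ‖ * S ≤ 1 * S := by
    rw [one_mul]
    calc ‖μ‖ * S = ∑ i, ‖μ * v i‖ := by
          rw [Finset.mul_sum]; exact Finset.sum_congr rfl fun i _ => (norm_mul μ (v i)).symm
      _ = ∑ i, ‖((A.map Complex.ofReal) *ᵥ v) i‖ := by
          rw [heq]; rfl
      _ ≤ ∑ i, ∑ j, A i j * ‖v j‖ := by
          refine Finset.sum_le_sum fun i _ => ?_
          show ‖∑ j, (A.map Complex.ofReal) i j * v j‖ ≤ _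
          refine (norm_sum_le _ _).trans ?_
          refine Finset.sum_le_sum fun j _ => ?_
          rw [norm_mul, Matrix.map_apply, Complex.norm_real, Real.norm_eq_abs,
            abs_of_nonneg (hA.1 i j)]
      _ = ∑ j, (∑ i, A i j) * ‖v j‖ := by
          rw [Finset.sum_comm]; exact Finset.sum_congr rfl fun j _ => (Finset.sum_mul _ _ _).symm
      _ = S := by
          rw [hS]; exact Finset.sum_congr rfl fun j _ => by rw [hA.2 j, one_mul]
  exact le_of_mul_le_mul_right hle hSpos

lemma entry_le_one (hA : ColumnStochastic A) (i j : Fin d) : A i j ≤ 1 := by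
  have h := hA.2 j
  calc A i j ≤ ∑ k, A k j := Finset.single_le_sum (fun k _ => hA.1 k j) (Finset.mem_univ i)
    _ = 1 := h

lemma col_eq_single (hA : ColumnStochastic A) {i j : Fin d} (h : A i j = 1) (k : Fin d) :
    A k j = if k = i then 1 else 0 := by
  have h0 : ∑ k ∈ Finset.univ.erase i, A k j = 0 := by
    have h1 := hA.2 j
    rw [← Finset.add_sum_erase _ _ (Finset.mem_univ i), h] at h1
    linarith
  by_cases hk : k = i
  · simp [hk, h]
  · simp only [hk, if_false]
    exact (Finset.sum_eq_zero_iff_of_nonneg (fun l _ => hA.1 l j)).mp h0 k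
      (Finset.mem_erase.mpr ⟨hk, Finset.mem_univ k⟩)

lemma mulVec_single_eq (hA : ColumnStochastic A) {i j : Fin d} (h : A i j = 1) :
    (A.map Complex.ofReal) *ᵥ Pi.single j 1 = Pi.single i 1 := by
  funext k
  rw [Matrix.mulVec_single]
  simp only [Matrix.map_apply, mul_one, col_eq_single hA h k, Pi.single_apply]
  split <;> simp [col_eq_single hA h k, *]

lemma tendsto_choose_pow_smul {E : Type*} [NormedAddCommGroup E] [NormedSpace ℂ E]
    {μ : ℂ} (hμ : ‖μ‖ < 1) (j : ℕ) (w : E) :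
    Tendsto (fun n : ℕ => ((n.choose j : ℂ) * μ ^ (n - j)) • w) atTop (nhds 0) := by
  rcases eq_or_ne μ 0 with hμ0 | hμ0
  · apply tendsto_const_nhds.congr'
    filter_upwards [eventually_ge_atTop (j + 1)] with n hn
    rw [hμ0, zero_pow (by omega : n - j ≠ 0)]
    simp
  · have hr0 : 0 < ‖μ‖ := norm_pos_iff.mpr hμ0
    have hsumm : Summable (fun n : ℕ => (n : ℝ) ^ j * ‖μ‖ ^ n) := by
      apply summable_pow_mul_geometric_of_norm_lt_one
      rwa [Real.norm_eq_abs, abs_of_nonneg (norm_nonneg μ)]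
    have htend : Tendsto (fun n : ℕ => ((n : ℝ) ^ j * ‖μ‖ ^ n) * (‖w‖ / ‖μ‖ ^ j))
        atTop (nhds 0) := by
      simpa using hsumm.tendsto_atTop_zero.mul_const (‖w‖ / ‖μ‖ ^ j)
    apply squeeze_zero_norm' ?_ htend
    filter_upwards [eventually_ge_atTop j] with n hn
    have h1 : ‖((n.choose j : ℂ) * μ ^ (n - j)) • w‖
        = (n.choose j : ℝ) * ‖μ‖ ^ (n - j) * ‖w‖ := by
      rw [norm_smul, norm_mul, norm_pow]
      simp [Complex.norm_natCast]
    rw [h1]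
    have h2 : (n.choose j : ℝ) ≤ (n : ℝ) ^ j := by
      exact_mod_cast Nat.choose_le_pow n j
    have h3 : ‖μ‖ ^ (n - j) = ‖μ‖ ^ n / ‖μ‖ ^ j := by
      rw [pow_sub₀ _ (ne_of_gt hr0) hn, div_eq_mul_inv]
    calc (n.choose j : ℝ) * ‖μ‖ ^ (n - j) * ‖w‖
        ≤ (n : ℝ) ^ j * ‖μ‖ ^ (n - j) * ‖w‖ :=
          mul_le_mul_of_nonneg_right
            (mul_le_mul_of_nonneg_right h2 (pow_nonneg (norm_nonneg μ) (n - j)))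
            (norm_nonneg w)
      _ = (n : ℝ) ^ j * ‖μ‖ ^ n * (‖w‖ / ‖μ‖ ^ j) := by
          rw [h3]; field_simp


lemma matMixing_of_conv {A : Matrix (Fin d) (Fin d) ℝ} (hA : ColumnStochastic A)
    {π : Fin d → ℂ} (hπ : ∑ i, π i = 1)
    (hconv : ∀ v : Fin d → ℂ,
      Tendsto (fun n => ((A.map Complex.ofReal) ^ n) *ᵥ v) atTop (nhds ((∑ i, v i) • π))) :
    MatMixing A := by
  classical
  set A' := A.map Complex.ofReal with hA'def
  have hπne : π ≠ 0 := by
    intro h0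
    rw [h0] at hπ
    simp at hπ
  have hfixaux : ∀ v : Fin d → ℂ, A' *ᵥ ((∑ i, v i) • π) = (∑ i, v i) • π := by
    intro v
    have hcont : Continuous (fun w : Fin d → ℂ => A' *ᵥ w) :=
      LinearMap.continuous_of_finiteDimensional (Matrix.mulVecLin A')
    have h1 : Tendsto (fun n => A' *ᵥ ((A' ^ n) *ᵥ v)) atTop
        (nhds (A' *ᵥ ((∑ i, v i) • π))) := (hcont.tendsto _).comp (hconv v)
    have h2 : (fun n => A' *ᵥ ((A' ^ n) *ᵥ v)) = fun n => (A' ^ (n + 1)) *ᵥ v := by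
      funext n; rw [Matrix.mulVec_mulVec, ← pow_succ']
    rw [h2] at h1
    have h3 : Tendsto (fun n => (A' ^ (n + 1)) *ᵥ v) atTop (nhds ((∑ i, v i) • π)) :=
      (hconv v).comp (tendsto_add_atTop_nat 1)
    exact tendsto_nhds_unique h1 h3
  have hfix : A' *ᵥ π = π := by
    have h := hfixaux π
    rwa [hπ, one_smul] at h
  have hker : ∀ v : Fin d → ℂ, A' *ᵥ v = v → v = (∑ i, v i) • π := by
    intro v hv
    have hc : ∀ n, (A' ^ n) *ᵥ v = v := by
      intro n
      induction n with
      | zero => simp [Matrix.one_mulVec]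
      | succ n ih => rw [pow_succ', ← Matrix.mulVec_mulVec, ih, hv]
    have h1 : Tendsto (fun n : ℕ => (A' ^ n) *ᵥ v) atTop (nhds v) := by
      simp only [hc]; exact tendsto_const_nhds
    exact tendsto_nhds_unique h1 (hconv v)
  set φ := Matrix.mulVecLin A' with hφdef
  have hφone : ∀ x : Fin d → ℂ, (φ - 1) x = A' *ᵥ x - x := fun x => rfl
  have hstep : ∀ x : Fin d → ℂ, (φ - 1) ((φ - 1) x) = 0 → (φ - 1) x = 0 := by
    intro x hx
    set y := (φ - 1) x with hy
    have h1 : A' *ᵥ y = y := sub_eq_zero.mp (by rw [← hφone y]; exact hx)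
    have h2 : ∑ i, y i = 0 := by
      rw [hy, hφone x]
      simp [Finset.sum_sub_distrib, sum_mulVec_eq hA]
      exact sub_eq_zero.mpr (sum_mulVec_eq hA x)
    have h3 := hker y h1
    rw [h2, zero_smul] at h3
    exact h3
  have hpowker : ∀ (k : ℕ) (x : Fin d → ℂ), ((φ - 1) ^ k) x = 0 → (φ - 1) x = 0 := by
    intro k
    induction k with
    | zero =>
      intro x hx
      simp only [pow_zero, Module.End.one_apply] at hx
      rw [hx, map_zero]
    | succ k ih =>
      intro x hx
      rw [pow_succ, Module.End.mul_apply] at hx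
      exact hstep x (ih _ hx)
  constructor
  · rw [rootMultiplicity_charpoly]
    have hmem : π ∈ Module.End.maxGenEigenspace φ 1 := by
      rw [Module.End.mem_maxGenEigenspace]
      refine ⟨1, ?_⟩
      rw [pow_one, one_smul, hφone, hfix, sub_self]
    have hle : Module.End.maxGenEigenspace φ 1 ≤ Submodule.span ℂ {π} := by
      intro x hx
      rw [Module.End.mem_maxGenEigenspace] at hx
      obtain ⟨k, hk⟩ := hx
      rw [one_smul] at hk
      have h1 : (φ - 1) x = 0 := hpowker k x hk
      have h2 : A' *ᵥ x = x := sub_eq_zero.mp (by rw [← hφone]; exact h1)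
      rw [Submodule.mem_span_singleton]
      exact ⟨∑ i, x i, (hker x h2).symm⟩
    have heq : Module.End.maxGenEigenspace φ 1 = Submodule.span ℂ {π} :=
      le_antisymm hle ((Submodule.span_singleton_le_iff_mem _ _).mpr hmem)
    rw [heq, finrank_span_singleton hπne]
  · intro μ hμnorm hroot
    obtain ⟨v, hvne, hveq⟩ := isRoot_charpoly_iff.mp hroot
    have hiter : ∀ n, (A' ^ n) *ᵥ v = μ ^ n • v := by
      intro n
      induction n with
      | zero => simp [Matrix.one_mulVec]
      | succ n ih =>
        rw [pow_succ', ← Matrix.mulVec_mulVec, ih, Matrix.mulVec_smul, hveq, smul_smul,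
          ← pow_succ]
    obtain ⟨i, hi⟩ := Function.ne_iff.mp hvne
    have h1 : Tendsto (fun n : ℕ => μ ^ n * v i) atTop (nhds (((∑ k, v k) • π) i)) := by
      have h0 := hconv v
      rw [tendsto_pi_nhds] at h0
      have h2 := h0 i
      simp only [hiter, Pi.smul_apply, smul_eq_mul] at h2
      exact h2
    set L : ℂ := (((∑ k, v k) • π) i) / v i with hL
    have h3 : Tendsto (fun n : ℕ => μ ^ n) atTop (nhds L) := by
      have h4 := h1.div_const (v i)
      refine h4.congr fun n => ?_
      rw [mul_div_assoc, div_self hi, mul_one]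
    have hLnorm : ‖L‖ = 1 := by
      have h5 : Tendsto (fun n : ℕ => ‖μ ^ n‖) atTop (nhds ‖L‖) := h3.norm
      have hc : (fun n : ℕ => ‖μ ^ n‖) = fun _ => (1 : ℝ) := by
        funext n; rw [norm_pow, hμnorm, one_pow]
      rw [hc] at h5
      exact (tendsto_nhds_unique tendsto_const_nhds h5).symm
    have hLne : L ≠ 0 := by
      intro h0; rw [h0] at hLnorm; simp at hLnorm
    have hμL : μ * L = L := by
      have h4 : Tendsto (fun n : ℕ => μ ^ (n + 1)) atTop (nhds L) :=
        h3.comp (tendsto_add_atTop_nat 1)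
      have h5 : Tendsto (fun n : ℕ => μ ^ (n + 1)) atTop (nhds (μ * L)) := by
        have h6 := h3.const_mul μ
        refine h6.congr fun n => ?_
        rw [← pow_succ']
      exact tendsto_nhds_unique h5 h4
    have := mul_right_cancel₀ hLne (by rw [hμL, one_mul] : μ * L = 1 * L)
    exact this

lemma conv_of_matMixing {A : Matrix (Fin d) (Fin d) ℝ} (hA : ColumnStochastic A)
    (h : MatMixing A) :
    ∃ π : Fin d → ℂ, (∀ i, ∃ r : ℝ, 0 ≤ r ∧ π i = (r : ℂ)) ∧ (∑ i, π i = 1) ∧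
      ∀ v : Fin d → ℂ,
        Tendsto (fun n => ((A.map Complex.ofReal) ^ n) *ᵥ v) atTop (nhds ((∑ i, v i) • π)) := by
  classical
  set A' := A.map Complex.ofReal with hA'def
  set φ := Matrix.mulVecLin A' with hφdef
  have hpow : ∀ (n : ℕ) (v : Fin d → ℂ), (φ ^ n) v = (A' ^ n) *ᵥ v := by
    intro n
    induction n with
    | zero => intro v; simp [Matrix.one_mulVec]
    | succ n ih =>
      intro v
      rw [pow_succ, Module.End.mul_apply, ih (φ v)]
      show (A' ^ n) *ᵥ (A' *ᵥ v) = _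
      rw [Matrix.mulVec_mulVec, ← pow_succ]
  have hroot1 : (Matrix.charpoly A').IsRoot 1 := by
    have hne : Matrix.charpoly A' ≠ 0 := (Matrix.charpoly_monic A').ne_zero
    exact (Polynomial.rootMultiplicity_pos hne).mp (by rw [h.1]; norm_num)
  obtain ⟨π₀, hπ₀ne, hπ₀eig⟩ := isRoot_charpoly_iff.mp hroot1
  rw [one_smul] at hπ₀eig
  have hφπ₀ : φ π₀ = π₀ := hπ₀eig
  have hfr1 : finrank ℂ (Module.End.maxGenEigenspace φ 1) = 1 := by
    rw [← rootMultiplicity_charpoly]; exact h.1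
  have hπ₀mem : π₀ ∈ Module.End.maxGenEigenspace φ 1 := by
    rw [Module.End.mem_maxGenEigenspace]
    refine ⟨1, ?_⟩
    rw [pow_one, one_smul]
    show φ π₀ - π₀ = 0
    rw [hφπ₀, sub_self]
  have hmax : Module.End.maxGenEigenspace φ 1 = Submodule.span ℂ {π₀} := by
    refine (Submodule.eq_of_le_of_finrank_le
      ((Submodule.span_singleton_le_iff_mem _ _).mpr hπ₀mem) ?_).symm
    rw [hfr1, finrank_span_singleton hπ₀ne]
  have key : ∀ x : Fin d → ℂ, ∃ c : ℂ,
      Tendsto (fun n => (φ ^ n) x) atTop (nhds (c • π₀)) := by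
    intro x
    have hx : x ∈ ⨆ μ, Module.End.maxGenEigenspace φ μ := by
      rw [Module.End.iSup_maxGenEigenspace_eq_top]; trivial
    refine Submodule.iSup_induction _ (motive := fun y => ∃ c : ℂ,
      Tendsto (fun n => (φ ^ n) y) atTop (nhds (c • π₀))) hx ?_ ?_ ?_
    · intro μ y hy
      by_cases hy0 : y = 0
      · refine ⟨0, ?_⟩
        simp only [hy0, map_zero, zero_smul]
        exact tendsto_const_nhds
      rcases eq_or_ne μ 1 with rfl | hμ1
      · rw [hmax, Submodule.mem_span_singleton] at hy
        obtain ⟨c, rfl⟩ := hy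
        refine ⟨c, ?_⟩
        have hconst : ∀ n, (φ ^ n) (c • π₀) = c • π₀ := by
          intro n
          induction n with
          | zero => simp
          | succ n ih => rw [pow_succ', Module.End.mul_apply, ih, _root_.map_smul, hφπ₀]
        simp only [hconst]
        exact tendsto_const_nhds
      · rw [Module.End.mem_maxGenEigenspace] at hy
        obtain ⟨k, hk⟩ := hy
        have hev : ∀ (m : ℕ) (z : Fin d → ℂ), z ≠ 0 → ((φ - μ • 1) ^ m) z = 0 →
            ∃ w : Fin d → ℂ, w ≠ 0 ∧ (φ - μ • 1) w = 0 := by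
          intro m
          induction m with
          | zero =>
            intro z hz h0
            simp only [pow_zero, Module.End.one_apply] at h0
            exact absurd h0 hz
          | succ m ih =>
            intro z hz h0
            by_cases hmz : ((φ - μ • 1) ^ m) z = 0
            · exact ih z hz hmz
            · refine ⟨((φ - μ • 1) ^ m) z, hmz, ?_⟩
              rw [← Module.End.mul_apply, ← pow_succ']
              exact h0
        obtain ⟨w, hwne, hweq⟩ := hev k y hy0 hk
        have hweig : A' *ᵥ w = μ • w := by
          have h1 : φ w - μ • w = 0 := by
            simpa [LinearMap.sub_apply, LinearMap.smul_apply, Module.End.one_apply] using hweq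
          exact sub_eq_zero.mp h1
        have hle := norm_eig_le_one hA hwne hweig
        have hlt : ‖μ‖ < 1 := by
          rcases lt_or_eq_of_le hle with hlt | heq1
          · exact hlt
          · exact absurd (h.2 μ heq1 (isRoot_charpoly_iff.mpr ⟨w, hwne, hweig⟩)) hμ1
        refine ⟨0, ?_⟩
        rw [zero_smul]
        set N := φ - μ • (1 : Module.End ℂ (Fin d → ℂ)) with hNdef
        have hNy : ∀ m, k ≤ m → (N ^ m) y = 0 := by
          intro m hm
          have hsplit : N ^ m = N ^ (m - k) * N ^ k := by
            rw [← pow_add]; congr 1; omega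
          rw [hsplit, Module.End.mul_apply, hk, map_zero]
        have hcomm : Commute N (μ • (1 : Module.End ℂ (Fin d → ℂ))) :=
          (Commute.one_right N).smul_right μ
        have hexp : ∀ n, (φ ^ n) y
            = ∑ j ∈ Finset.range (n + 1),
                ((n.choose j : ℂ) * μ ^ (n - j)) • ((N ^ j) y) := by
          intro n
          have hφeq : φ = N + μ • 1 := by rw [hNdef]; abel
          conv_lhs => rw [hφeq]
          rw [hcomm.add_pow n, LinearMap.coe_sum, Finset.sum_apply]
          refine Finset.sum_congr rfl fun j hj => ?_
          rw [Module.End.mul_apply, Module.End.mul_apply, Module.End.natCast_apply,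
            _root_.smul_pow, one_pow, LinearMap.smul_apply, Module.End.one_apply,
            _root_.map_smul, map_nsmul, ← Nat.cast_smul_eq_nsmul ℂ, smul_smul, mul_comm (μ ^ (n - j))]
        have heventually : ∀ᶠ n in atTop, (φ ^ n) y
            = ∑ j ∈ Finset.range k, ((n.choose j : ℂ) * μ ^ (n - j)) • ((N ^ j) y) := by
          filter_upwards [eventually_ge_atTop k] with n hn
          rw [hexp n]
          refine (Finset.sum_subset (Finset.range_subset_range.mpr (by omega)) ?_).symm
          intro j hj hjn
          rw [Finset.mem_range, not_lt] at hjn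
          rw [hNy j hjn, smul_zero]
        have hlim : Tendsto (fun n => ∑ j ∈ Finset.range k,
            ((n.choose j : ℂ) * μ ^ (n - j)) • ((N ^ j) y)) atTop (nhds 0) := by
          have hterms := tendsto_finset_sum (Finset.range k)
            (fun j _ => tendsto_choose_pow_smul hlt j ((N ^ j) y))
          simpa using hterms
        exact Tendsto.congr' (heventually.mono fun _ hn => hn.symm) hlim
    · refine ⟨0, ?_⟩
      simp only [map_zero, zero_smul]
      exact tendsto_const_nhds
    · rintro y z ⟨c₁, h₁⟩ ⟨c₂, h₂⟩
      exact ⟨c₁ + c₂, by simpa [map_add, add_smul] using h₁.add h₂⟩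
  have hsum : ∀ (n : ℕ) (x : Fin d → ℂ), ∑ i, ((φ ^ n) x) i = ∑ i, x i := by
    intro n x; rw [hpow]; exact sum_pow_mulVec_eq hA n x
  have hcont : Continuous (fun v : Fin d → ℂ => ∑ i, v i) :=
    continuous_finset_sum _ fun i _ => continuous_apply i
  have hlim2 : ∀ x : Fin d → ℂ, ∃ c : ℂ,
      Tendsto (fun n => (φ ^ n) x) atTop (nhds (c • π₀)) ∧ c * ∑ i, π₀ i = ∑ i, x i := by
    intro x
    obtain ⟨c, hc⟩ := key x
    refine ⟨c, hc, ?_⟩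
    have h1 : Tendsto (fun n => ∑ i, ((φ ^ n) x) i) atTop (nhds (∑ i, (c • π₀) i)) :=
      (hcont.tendsto _).comp hc
    have h2 : (fun n => ∑ i, ((φ ^ n) x) i) = fun _ => ∑ i, x i := funext fun n => hsum n x
    rw [h2] at h1
    have h3 := tendsto_nhds_unique h1 tendsto_const_nhds
    rw [← h3]
    simp [Finset.mul_sum]
  obtain ⟨i₀, hi₀⟩ := Function.ne_iff.mp hπ₀ne
  have hsingle : ∑ i, Pi.single i₀ (1 : ℂ) i = 1 := by
    simp [Pi.single_apply]
  obtain ⟨c₀, hc₀, hc₀sum⟩ := hlim2 (Pi.single i₀ 1)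
  rw [hsingle] at hc₀sum
  have hS₀ : (∑ i, π₀ i) ≠ 0 := by
    intro h0; rw [h0, mul_zero] at hc₀sum; exact one_ne_zero hc₀sum.symm
  set S₀ := ∑ i, π₀ i with hS₀def
  set π : Fin d → ℂ := S₀⁻¹ • π₀ with hπdef
  have hgen : ∀ v : Fin d → ℂ,
      Tendsto (fun n => ((A' ^ n) *ᵥ v)) atTop (nhds ((∑ i, v i) • π)) := by
    intro v
    obtain ⟨c, hc, hcs⟩ := hlim2 v
    have hceq : (∑ i, v i) • π = c • π₀ := by
      rw [hπdef, smul_smul, ← hcs, mul_assoc, mul_inv_cancel₀ hS₀, mul_one]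
    rw [hceq]
    have h5 := hc
    simp only [hpow] at h5
    exact h5
  refine ⟨π, ?_, ?_, hgen⟩
  · have hmapn : ∀ n : ℕ, A' ^ n = (A ^ n).map Complex.ofReal := by
      intro n
      induction n with
      | zero => rw [pow_zero, pow_zero]; exact (Matrix.map_one _ (by simp) (by simp)).symm
      | succ n ih =>
        rw [pow_succ, pow_succ, ih, hA'def]
        exact (Matrix.map_mul (f := Complex.ofRealHom)).symm
    have hentry : ∀ (n : ℕ) (i j : Fin d), 0 ≤ (A ^ n) i j := by
      intro n
      induction n with
      | zero => intro i j; by_cases hij : i = j <;> simp [Matrix.one_apply, hij]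
      | succ n ih =>
        intro i j
        rw [pow_succ, Matrix.mul_apply]
        exact Finset.sum_nonneg fun k _ => mul_nonneg (ih i k) (hA.1 k j)
    intro i
    have h1 : Tendsto (fun n => ((A' ^ n) *ᵥ Pi.single i₀ 1) i) atTop (nhds (π i)) := by
      have h6 := hgen (Pi.single i₀ 1)
      rw [hsingle, one_smul] at h6
      rw [tendsto_pi_nhds] at h6
      exact h6 i
    have h2 : ∀ n, ((A' ^ n) *ᵥ Pi.single i₀ 1) i = ((A ^ n) i i₀ : ℂ) := by
      intro n
      rw [hmapn n, Matrix.mulVec_single]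
      simp [Matrix.map_apply]
    simp only [h2] at h1
    refine ⟨(π i).re, ?_, ?_⟩
    · have h3 : Tendsto (fun n => ((A ^ n) i i₀ : ℝ)) atTop (nhds ((π i).re)) := by
        have h7 := (Complex.continuous_re.tendsto _).comp h1
        simpa [Function.comp_def] using h7
      exact ge_of_tendsto' h3 fun n => hentry n i i₀
    · have h4 : Tendsto (fun n => (((A ^ n) i i₀ : ℂ)).im) atTop (nhds ((π i).im)) :=
        (Complex.continuous_im.tendsto _).comp h1
      have h5 : (π i).im = 0 := by
        have h8 : (fun n => (((A ^ n) i i₀ : ℂ)).im) = fun _ => (0 : ℝ) := by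
          funext n; simp
        rw [h8] at h4
        exact tendsto_nhds_unique h4 tendsto_const_nhds
      exact (Complex.ext (by simp) (by simp [h5]))
  · rw [hπdef]
    simp only [Pi.smul_apply, smul_eq_mul]
    rw [← Finset.mul_sum, ← hS₀def, inv_mul_cancel₀ hS₀]

lemma cducMap_apply' {A : Matrix (Fin d) (Fin d) ℝ} {B : Mat d} (X : Mat d) (i j : Fin d) :
    cducMap A B X i j = if i = j then ∑ k, (A i k : ℂ) * X k k else B i j * X i j := rfl

lemma ducMap_apply' {A : Matrix (Fin d) (Fin d) ℝ} {C : Mat d} (X : Mat d) (i j : Fin d) :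
    ducMap A C X i j = if i = j then ∑ k, (A i k : ℂ) * X k k else C i j * X j i := rfl

lemma cducMap_pow_diag (A : Matrix (Fin d) (Fin d) ℝ) (B : Mat d) :
    ∀ (n : ℕ) (X : Mat d) (i : Fin d),
      (((cducMap A B) ^ n) X) i i = (((A.map Complex.ofReal) ^ n) *ᵥ (fun j => X j j)) i := by
  intro n
  induction n with
  | zero => intro X i; simp [Matrix.one_mulVec]
  | succ n ih =>
    intro X i
    rw [pow_succ, Module.End.mul_apply, ih (cducMap A B X) i]
    have hdiag : (fun j => (cducMap A B X) j j)
        = (A.map Complex.ofReal) *ᵥ (fun j => X j j) := by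
      funext j
      rw [cducMap_apply', if_pos rfl]
      rfl
    rw [hdiag, Matrix.mulVec_mulVec, ← pow_succ]

lemma ducMap_pow_diag (A : Matrix (Fin d) (Fin d) ℝ) (C : Mat d) :
    ∀ (n : ℕ) (X : Mat d) (i : Fin d),
      (((ducMap A C) ^ n) X) i i = (((A.map Complex.ofReal) ^ n) *ᵥ (fun j => X j j)) i := by
  intro n
  induction n with
  | zero => intro X i; simp [Matrix.one_mulVec]
  | succ n ih =>
    intro X i
    rw [pow_succ, Module.End.mul_apply, ih (ducMap A C X) i]
    have hdiag : (fun j => (ducMap A C X) j j)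
        = (A.map Complex.ofReal) *ᵥ (fun j => X j j) := by
      funext j
      rw [ducMap_apply', if_pos rfl]
      rfl
    rw [hdiag, Matrix.mulVec_mulVec, ← pow_succ]

lemma cducMap_pow_offdiag (A : Matrix (Fin d) (Fin d) ℝ) (B : Mat d) :
    ∀ (n : ℕ) (X : Mat d) {i j : Fin d}, i ≠ j →
      (((cducMap A B) ^ n) X) i j = B i j ^ n * X i j := by
  intro n
  induction n with
  | zero => intro X i j hij; simp
  | succ n ih =>
    intro X i j hij
    rw [pow_succ, Module.End.mul_apply, ih (cducMap A B X) hij, cducMap_apply', if_neg hij]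
    ring

lemma ducMap_pow_offdiag {A : Matrix (Fin d) (Fin d) ℝ} {C : Mat d} (hC : C.IsHermitian) :
    ∀ (n : ℕ) (X : Mat d) {i j : Fin d}, i ≠ j →
      (((ducMap A C) ^ n) X) i j
        = C i j ^ ((n + 1) / 2) * (starRingEnd ℂ (C i j)) ^ (n / 2)
          * (if n % 2 = 0 then X i j else X j i) := by
  intro n
  induction n with
  | zero => intro X i j hij; simp
  | succ n ih =>
    intro X i j hij
    rw [pow_succ, Module.End.mul_apply, ih (ducMap A C X) hij]
    rw [ducMap_apply', ducMap_apply', if_neg hij, if_neg (Ne.symm hij)]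
    have hji : C j i = starRingEnd ℂ (C i j) := by
      rw [starRingEnd_apply]
      exact (hC.apply j i).symm
    rw [hji]
    obtain ⟨m, rfl | rfl⟩ : ∃ m, n = 2 * m ∨ n = 2 * m + 1 := ⟨n / 2, by omega⟩
    · have e1 : (2 * m + 1) / 2 = m := by omega
      have e2 : (2 * m) / 2 = m := by omega
      have e3 : (2 * m + 1 + 1) / 2 = m + 1 := by omega
      have e4 : (2 * m) % 2 = 0 := by omega
      have e5 : (2 * m + 1) % 2 = 1 := by omega
      rw [e1, e2, e3, e4, e5]
      norm_num
      ring
    · have e1 : (2 * m + 1 + 1) / 2 = m + 1 := by omega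
      have e2 : (2 * m + 1) / 2 = m := by omega
      have e3 : (2 * m + 1 + 1 + 1) / 2 = m + 1 := by omega
      have e4 : (2 * m + 1) % 2 = 1 := by omega
      have e5 : (2 * m + 1 + 1) % 2 = 0 := by omega
      rw [e1, e2, e3, e4, e5]
      norm_num
      ring

lemma ducMap_pow_offdiag_norm {A : Matrix (Fin d) (Fin d) ℝ} {C : Mat d} (hC : C.IsHermitian)
    (n : ℕ) (X : Mat d) {i j : Fin d} (hij : i ≠ j) :
    ‖(((ducMap A C) ^ n) X) i j‖ ≤ ‖C i j‖ ^ n * max ‖X i j‖ ‖X j i‖ := by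
  rw [ducMap_pow_offdiag hC n X hij]
  calc ‖C i j ^ ((n + 1) / 2) * (starRingEnd ℂ (C i j)) ^ (n / 2)
        * (if n % 2 = 0 then X i j else X j i)‖
      = ‖C i j‖ ^ n * ‖if n % 2 = 0 then X i j else X j i‖ := by
        rw [norm_mul, norm_mul, norm_pow, norm_pow, starRingEnd_apply, norm_star, ← pow_add,
          show (n + 1) / 2 + n / 2 = n from by omega]
    _ ≤ ‖C i j‖ ^ n * max ‖X i j‖ ‖X j i‖ := by
        refine mul_le_mul_of_nonneg_left ?_ (pow_nonneg (norm_nonneg _) n)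
        split
        · exact le_max_left _ _
        · exact le_max_right _ _

lemma matMixing_of_mixing {A : Matrix (Fin d) (Fin d) ℝ} (hA : ColumnStochastic A)
    (Φ : Module.End ℂ (Mat d))
    (hdiag : ∀ (n : ℕ) (X : Mat d) (i : Fin d),
      ((Φ ^ n) X) i i = (((A.map Complex.ofReal) ^ n) *ᵥ (fun j => X j j)) i)
    (hmix : Mixing Φ) : MatMixing A := by
  obtain ⟨ρ, ⟨hpsd, htr⟩, hconv⟩ := hmix
  have htr' : ∑ i, ρ i i = 1 := by simpa [Matrix.trace, Matrix.diag] using htr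
  apply matMixing_of_conv hA (π := fun i => ρ i i) htr'
  intro v
  rw [tendsto_pi_nhds]
  intro i
  have h1 := hconv (Matrix.diagonal v)
  have h2 : Tendsto (fun n => ((Φ ^ n) (Matrix.diagonal v)) i i) atTop
      (nhds (((Matrix.diagonal v).trace • ρ) i i)) := by
    have h3 := (tendsto_pi_nhds.mp h1) i
    exact (tendsto_pi_nhds.mp h3) i
  simp only [hdiag] at h2
  have h4 : (fun j => (Matrix.diagonal v) j j) = v := by
    funext j; simp
  rw [h4] at h2
  have h5 : ((Matrix.diagonal v).trace • ρ) i i = (∑ k, v k) * ρ i i := by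
    simp [Matrix.trace_diagonal]
  rw [h5] at h2
  simpa using h2

lemma pi_single_fixed_contra {A : Matrix (Fin d) (Fin d) ℝ} (hA : ColumnStochastic A)
    {π : Fin d → ℂ}
    (hconv : ∀ v : Fin d → ℂ,
      Tendsto (fun n => ((A.map Complex.ofReal) ^ n) *ᵥ v) atTop (nhds ((∑ i, v i) • π)))
    {i j : Fin d} (hij : i ≠ j) (hii : A i i = 1) (hjj : A j j = 1) : False := by
  have hsingle : ∀ k : Fin d, ∑ l, (Pi.single k 1 : Fin d → ℂ) l = 1 := by
    intro k; simp [Pi.single_apply]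
  have hfix : ∀ k : Fin d, A k k = 1 → π = Pi.single k 1 := by
    intro k hk
    have h1 : ∀ n : ℕ, ((A.map Complex.ofReal) ^ n) *ᵥ (Pi.single k 1 : Fin d → ℂ)
        = Pi.single k 1 := by
      intro n
      induction n with
      | zero => rw [pow_zero, Matrix.one_mulVec]
      | succ n ih => rw [pow_succ', ← Matrix.mulVec_mulVec, ih, mulVec_single_eq hA hk]
    have h2 := hconv (Pi.single k 1)
    rw [hsingle k, one_smul] at h2
    simp only [h1] at h2
    exact tendsto_nhds_unique h2 tendsto_const_nhds
  have e1 := hfix i hii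
  have e2 := hfix j hjj
  rw [e1] at e2
  have e3 := congrFun e2 i
  simp [Pi.single_apply, hij, Ne.symm hij] at e3

lemma pi_swap_contra {A : Matrix (Fin d) (Fin d) ℝ} (hA : ColumnStochastic A)
    {π : Fin d → ℂ}
    (hconv : ∀ v : Fin d → ℂ,
      Tendsto (fun n => ((A.map Complex.ofReal) ^ n) *ᵥ v) atTop (nhds ((∑ i, v i) • π)))
    {i j : Fin d} (hij : i ≠ j) (hij1 : A i j = 1) (hji1 : A j i = 1) : False := by
  have hsingle : ∑ l, (Pi.single i 1 : Fin d → ℂ) l = 1 := by simp [Pi.single_apply]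
  have haux : ∀ n : ℕ, ((A.map Complex.ofReal) ^ n) *ᵥ (Pi.single i 1 : Fin d → ℂ)
      = (if n % 2 = 0 then Pi.single i 1 else Pi.single j 1) := by
    intro n
    induction n with
    | zero => rw [pow_zero, Matrix.one_mulVec, if_pos rfl]
    | succ n ih =>
      rw [pow_succ', ← Matrix.mulVec_mulVec, ih]
      by_cases hn : n % 2 = 0
      · rw [if_pos hn, if_neg (by omega), mulVec_single_eq hA hji1]
      · rw [if_neg hn, if_pos (by omega), mulVec_single_eq hA hij1]
  have h2 := hconv (Pi.single i 1)
  rw [hsingle, one_smul] at h2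
  have heven : π = Pi.single i 1 := by
    have h3 : Tendsto (fun m : ℕ => ((A.map Complex.ofReal) ^ (2 * m)) *ᵥ
        (Pi.single i 1 : Fin d → ℂ)) atTop (nhds π) :=
      h2.comp (tendsto_atTop_mono (fun m => (by omega : m ≤ 2 * m)) tendsto_id)
    have h4 : (fun m : ℕ => ((A.map Complex.ofReal) ^ (2 * m)) *ᵥ (Pi.single i 1 : Fin d → ℂ))
        = fun _ => Pi.single i 1 := by
      funext m; rw [haux, if_pos (by omega)]
    rw [h4] at h3
    exact tendsto_nhds_unique h3 tendsto_const_nhds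
  have hodd : π = Pi.single j 1 := by
    have h3 : Tendsto (fun m : ℕ => ((A.map Complex.ofReal) ^ (2 * m + 1)) *ᵥ
        (Pi.single i 1 : Fin d → ℂ)) atTop (nhds π) :=
      h2.comp (tendsto_atTop_mono (fun m => (by omega : m ≤ 2 * m + 1)) tendsto_id)
    have h4 : (fun m : ℕ => ((A.map Complex.ofReal) ^ (2 * m + 1)) *ᵥ
        (Pi.single i 1 : Fin d → ℂ)) = fun _ => Pi.single j 1 := by
      funext m; rw [haux, if_neg (by omega)]
    rw [h4] at h3
    exact tendsto_nhds_unique h3 tendsto_const_nhds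
  rw [heven] at hodd
  have e3 := congrFun hodd i
  simp [Pi.single_apply, hij, Ne.symm hij] at e3

lemma psd_contradiction {B : Mat d} (hB : B.PosSemidef) {i j : Fin d} (hij : i ≠ j)
    (hnorm : 1 ≤ ‖B i j‖) {α β : ℝ} (hii : B i i = (α : ℂ)) (hjj : B j j = (β : ℂ))
    (hα : α ≤ 1) (hβ : β ≤ 1) : α = 1 ∧ β = 1 := by
  set c := B i j with hc
  have hji : B j i = starRingEnd ℂ c := by
    rw [starRingEnd_apply]
    exact (hB.isHermitian.apply j i).symm
  set w : Fin d → ℂ := (‖c‖ : ℂ) • (Pi.single i 1 : Fin d → ℂ)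
    + (-(starRingEnd ℂ c)) • (Pi.single j 1 : Fin d → ℂ) with hw
  have hS := hB.dotProduct_mulVec_nonneg w
  have hcc : c * starRingEnd ℂ c = (‖c‖ : ℂ) ^ 2 := by
    rw [Complex.mul_conj]
    norm_cast
    rw [Complex.normSq_eq_norm_sq]
  have hstar_single : ∀ k : Fin d, star ((Pi.single k 1 : Fin d → ℂ))
      = (Pi.single k 1 : Fin d → ℂ) := by
    intro k
    funext l
    simp [Pi.star_apply, Pi.single_apply]
  have hsw : star w = (‖c‖ : ℂ) • (Pi.single i 1 : Fin d → ℂ)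
      + (-c) • (Pi.single j 1 : Fin d → ℂ) := by
    rw [hw, star_add, star_smul, star_smul, hstar_single, hstar_single]
    simp [Complex.conj_ofReal]
  have hmv : B *ᵥ w = (‖c‖ : ℂ) • (fun k => B k i)
      + (-(starRingEnd ℂ c)) • (fun k => B k j) := by
    rw [hw, Matrix.mulVec_add, Matrix.mulVec_smul, Matrix.mulVec_smul,
      Matrix.mulVec_single, Matrix.mulVec_single]
    ext k; simp
  have hQ : star w ⬝ᵥ B *ᵥ w = ((‖c‖ ^ 2 * α - 2 * ‖c‖ ^ 3 + ‖c‖ ^ 2 * β : ℝ) : ℂ) := by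
    rw [hmv, hsw, add_dotProduct, smul_dotProduct, smul_dotProduct,
      single_dotProduct, single_dotProduct]
    simp only [Pi.add_apply, Pi.smul_apply, smul_eq_mul, mul_one]
    rw [hii, hjj, hji, ← hc]
    push_cast
    linear_combination ((β : ℂ) - 2 * (‖c‖ : ℂ)) * hcc
  rw [hQ, Complex.zero_le_real] at hS
  have h1 : (0 : ℝ) < ‖c‖ := lt_of_lt_of_le one_pos hnorm
  have h4 : 1 ≤ ‖c‖ ^ 2 := by nlinarith
  have h3 : ‖c‖ ^ 2 ≤ ‖c‖ ^ 3 := by nlinarith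
  have h2 : α + β ≥ 2 := by nlinarith [hS, h3, h4]
  constructor <;> linarith

end DUCAux

/-- A CDUC channel `Φ_{A,B}` (resp. DUC channel `Φ_{A,C}`) is mixing
if and only if `A` is mixing. -/
theorem duc_mixing_iff (d : ℕ) (A : Matrix (Fin d) (Fin d) ℝ)
    (hA : ColumnStochastic A) :
    (∀ B : Mat d, B.PosSemidef → (∀ i, B i i = (A i i : ℂ)) →
      (Mixing (cducMap A B) ↔ MatMixing A)) ∧
    (∀ C : Mat d, C.IsHermitian →
      (∀ i j, i ≠ j → Complex.normSq (C i j) ≤ A i j * A j i) →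
      (Mixing (ducMap A C) ↔ MatMixing A)) := by
  constructor
  · intro B hB hBdiag
    constructor
    · intro hmix
      exact DUCAux.matMixing_of_mixing hA (cducMap A B)
        (fun n X i => DUCAux.cducMap_pow_diag A B n X i) hmix
    · intro hmat
      obtain ⟨π, hπreal, hπsum, hconv⟩ := DUCAux.conv_of_matMixing hA hmat
      refine ⟨Matrix.diagonal π, ⟨?_, ?_⟩, ?_⟩
      · rw [Matrix.posSemidef_diagonal_iff]
        intro i
        obtain ⟨r, hr, hre⟩ := hπreal i
        rw [hre]
        exact_mod_cast hr
      · rw [Matrix.trace_diagonal]; exact hπsum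
      · intro X
        refine tendsto_pi_nhds.mpr fun i => ?_
        refine tendsto_pi_nhds.mpr fun j => ?_
        by_cases hij : i = j
        · subst hij
          have h1 := tendsto_pi_nhds.mp (hconv (fun k => X k k)) i
          have h3 : (X.trace • Matrix.diagonal π) i i = ((∑ k, X k k) • π) i := by
            simp [Matrix.trace, Matrix.diag]
          rw [h3]
          refine h1.congr fun n => ?_
          exact (DUCAux.cducMap_pow_diag A B n X i).symm
        · have hBlt : ‖B i j‖ < 1 := by
            by_contra hge
            push_neg at hge
            obtain ⟨h2, h3⟩ := DUCAux.psd_contradiction hB hij hge (hBdiag i) (hBdiag j)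
              (DUCAux.entry_le_one hA i i) (DUCAux.entry_le_one hA j j)
            exact DUCAux.pi_single_fixed_contra hA hconv hij h2 h3
          have h5 : (X.trace • Matrix.diagonal π) i j = 0 := by
            simp [Matrix.diagonal_apply_ne _ hij]
          rw [h5]
          have h6 : Tendsto (fun n : ℕ => B i j ^ n * X i j) atTop (nhds 0) := by
            simpa using (tendsto_pow_atTop_nhds_zero_of_norm_lt_one hBlt).mul_const (X i j)
          refine h6.congr fun n => ?_
          exact (DUCAux.cducMap_pow_offdiag A B n X hij).symm
  · intro C hC hCbound
    constructor
    · intro hmix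
      exact DUCAux.matMixing_of_mixing hA (ducMap A C)
        (fun n X i => DUCAux.ducMap_pow_diag A C n X i) hmix
    · intro hmat
      obtain ⟨π, hπreal, hπsum, hconv⟩ := DUCAux.conv_of_matMixing hA hmat
      refine ⟨Matrix.diagonal π, ⟨?_, ?_⟩, ?_⟩
      · rw [Matrix.posSemidef_diagonal_iff]
        intro i
        obtain ⟨r, hr, hre⟩ := hπreal i
        rw [hre]
        exact_mod_cast hr
      · rw [Matrix.trace_diagonal]; exact hπsum
      · intro X
        refine tendsto_pi_nhds.mpr fun i => ?_
        refine tendsto_pi_nhds.mpr fun j => ?_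
        by_cases hij : i = j
        · subst hij
          have h1 := tendsto_pi_nhds.mp (hconv (fun k => X k k)) i
          have h3 : (X.trace • Matrix.diagonal π) i i = ((∑ k, X k k) • π) i := by
            simp [Matrix.trace, Matrix.diag]
          rw [h3]
          refine h1.congr fun n => ?_
          exact (DUCAux.ducMap_pow_diag A C n X i).symm
        · have hClt : ‖C i j‖ < 1 := by
            by_contra hge
            push_neg at hge
            have h1 : (1 : ℝ) ≤ Complex.normSq (C i j) := by
              rw [Complex.normSq_eq_norm_sq]
              nlinarith
            have h2 := hCbound i j hij
            have h3 := DUCAux.entry_le_one hA i j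
            have h4 := DUCAux.entry_le_one hA j i
            have h5 := hA.1 i j
            have h6 := hA.1 j i
            have hij1 : A i j = 1 := by nlinarith
            have hji1 : A j i = 1 := by nlinarith
            exact DUCAux.pi_swap_contra hA hconv hij hij1 hji1
          have h5 : (X.trace • Matrix.diagonal π) i j = 0 := by
            simp [Matrix.diagonal_apply_ne _ hij]
          rw [h5]
          have h6 : Tendsto (fun n : ℕ => ‖C i j‖ ^ n * max ‖X i j‖ ‖X j i‖) atTop
              (nhds 0) := by
            simpa using (tendsto_pow_atTop_nhds_zero_of_lt_one (norm_nonneg _) hClt).mul_const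
              (max ‖X i j‖ ‖X j i‖)
          exact squeeze_zero_norm (fun n => DUCAux.ducMap_pow_offdiag_norm hC n X hij) h6
end

section
/- Let Φ be a quantum channel on M_d(ℂ) with linearly independent Kraus operators K₁, …, K_p, and let Φ^C : M_d(ℂ) → M_p(ℂ) be its complementary channel, Φ^C(X) = ∑_{i,j=1}^p Tr(K_i† K_j X) E_{ij}, where E_{ij} are the matrix units of M_p(ℂ). Let M(Φ^C) be the maximum number M of unit vectors |ψ₁⟩, …, |ψ_M⟩ ∈ ℂ^d such that Tr(Φ^C(|ψ_m⟩⟨ψ_m|) Φ^C(|ψ_{m'}⟩⟨ψ_{m'}|)) = 0 for all m ≠ m', and let D(Φ) be the maximum dimension of a subspace C ⊆ ℂ^d that is correctable for Φ. Then M(Φ^C) + D(Φ) ≤ d + 1. -/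
open Matrix Filter
open scoped ComplexOrder

/-- The complementary channel `Φ^C(X) = ∑ᵢⱼ Tr(Kᵢᴴ Kⱼ X) Eᵢⱼ` of a channel with
linearly independent Kraus operators `K`. -/
noncomputable def compChannel {d p : ℕ} (K : Fin p → Mat d) (X : Mat d) : Mat p :=
  Matrix.of fun i j => ((K i)ᴴ * K j * X).trace

namespace CapAux

variable {d p q : ℕ}

/-- conjugate-linear-in-first-argument dot product. -/

noncomputable def dotc {n : ℕ} (u v : Fin n → ℂ) : ℂ := star u ⬝ᵥ v

lemma dotc_eq_sum {n : ℕ} (u v : Fin n → ℂ) : dotc u v = ∑ i, star (u i) * v i := rfl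

lemma dotc_comm {n : ℕ} (u v : Fin n → ℂ) : dotc u v = star (dotc v u) := by
  simp [dotc_eq_sum, mul_comm]

lemma dotc_self_nonneg_re {n : ℕ} (u : Fin n → ℂ) :
    dotc u u = (∑ i, Complex.normSq (u i) : ℝ) := by
  simp [dotc_eq_sum, Complex.star_def, Complex.normSq_eq_conj_mul_self]

lemma dotc_self_eq_zero {n : ℕ} {u : Fin n → ℂ} (h : dotc u u = 0) : u = 0 := by
  rw [dotc_self_nonneg_re] at h
  have h' : (∑ i, Complex.normSq (u i) : ℝ) = 0 := by exact_mod_cast h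
  funext i
  have := (Finset.sum_eq_zero_iff_of_nonneg (fun i _ => Complex.normSq_nonneg (u i))).1 h' i
    (Finset.mem_univ i)
  exact Complex.normSq_eq_zero.1 this

lemma sum_mulVec {ι : Type*} (s : Finset ι) (M : ι → Mat d) (v : Fin d → ℂ) :
    (∑ i ∈ s, M i) *ᵥ v = ∑ i ∈ s, M i *ᵥ v := by
  funext j
  simp only [Matrix.mulVec, dotProduct, Finset.sum_apply, Matrix.sum_apply,
    Finset.sum_mul]
  exact Finset.sum_comm

lemma dotc_kraus (K : Fin p → Mat d) (hTP : ∑ i, (K i)ᴴ * K i = 1) (u v : Fin d → ℂ) :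
    ∑ i, dotc (K i *ᵥ u) (K i *ᵥ v) = dotc u v := by
  have h : ∀ i, dotc (K i *ᵥ u) (K i *ᵥ v) = star u ⬝ᵥ (((K i)ᴴ * K i) *ᵥ v) := by
    intro i
    rw [dotc, star_mulVec, ← dotProduct_mulVec, mulVec_mulVec]
  simp only [h]
  have h2 : ∑ x, star u ⬝ᵥ (((K x)ᴴ * K x) *ᵥ v) = star u ⬝ᵥ ((∑ x, (K x)ᴴ * K x) *ᵥ v) := by
    rw [sum_mulVec]
    simp only [dotProduct, Finset.sum_apply, Finset.mul_sum]
    exact Finset.sum_comm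
  rw [h2, hTP, one_mulVec]
  rfl

noncomputable def Fmat (K : Fin p → Mat d) (φ ψ : Fin d → ℂ) : Mat d :=
  ∑ i, vecMulVec (K i *ᵥ φ) (star (K i *ᵥ ψ))

lemma trace_vecMulVec_mul {n : ℕ} (w x y z : Fin n → ℂ) :
    (vecMulVec w x * vecMulVec y z).trace = (x ⬝ᵥ y) * (z ⬝ᵥ w) := by
  simp only [Matrix.trace, Matrix.diag, Matrix.mul_apply, vecMulVec_apply, dotProduct,
    Finset.sum_mul_sum]
  rw [Finset.sum_comm]
  exact Finset.sum_congr rfl fun a _ => Finset.sum_congr rfl fun b _ => by ring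

lemma trace_Fmat_mul (K : Fin p → Mat d) (φ ψ φ' ψ' : Fin d → ℂ) :
    (Fmat K φ ψ * Fmat K φ' ψ').trace
      = ∑ i, ∑ j, dotc (K i *ᵥ ψ) (K j *ᵥ φ') * dotc (K j *ᵥ ψ') (K i *ᵥ φ) := by
  simp only [Fmat, Matrix.sum_mul, Matrix.mul_sum, Matrix.trace_sum]
  rw [Finset.sum_comm]
  exact Finset.sum_congr rfl fun i _ => Finset.sum_congr rfl fun j _ =>
    trace_vecMulVec_mul _ _ _ _

lemma trace_mul_pure {n : ℕ} (A : Matrix (Fin n) (Fin n) ℂ) (ψ : Fin n → ℂ) :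
    (A * pureState ψ).trace = star ψ ⬝ᵥ (A *ᵥ ψ) := by
  simp only [Matrix.trace, Matrix.diag, Matrix.mul_apply, pureState, Matrix.of_apply,
    dotProduct, Matrix.mulVec, Pi.star_apply, Finset.mul_sum]
  exact Finset.sum_congr rfl fun a _ => Finset.sum_congr rfl fun b _ => by ring

lemma compChannel_apply (K : Fin p → Mat d) (ψ : Fin d → ℂ) (i j : Fin p) :
    compChannel K (pureState ψ) i j = dotc (K i *ᵥ ψ) (K j *ᵥ ψ) := by
  show ((K i)ᴴ * K j * pureState ψ).trace = _
  rw [trace_mul_pure, dotc, star_mulVec, ← dotProduct_mulVec, mulVec_mulVec]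

lemma comp_trace_eq (K : Fin p → Mat d) (ψ φ : Fin d → ℂ) :
    (compChannel K (pureState ψ) * compChannel K (pureState φ)).trace
      = (Fmat K ψ φ * Fmat K φ ψ).trace := by
  rw [trace_Fmat_mul]
  simp only [Matrix.trace, Matrix.diag, Matrix.mul_apply, compChannel_apply]
  rw [Finset.sum_comm]
  exact Finset.sum_congr rfl fun i _ => Finset.sum_congr rfl fun j _ => by ring

lemma Fmat_conjTranspose (K : Fin p → Mat d) (φ ψ : Fin d → ℂ) :
    (Fmat K φ ψ)ᴴ = Fmat K ψ φ := by
  simp only [Fmat, Matrix.conjTranspose_sum]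
  refine Finset.sum_congr rfl fun i _ => ?_
  ext a b
  simp [vecMulVec_apply, Matrix.conjTranspose_apply, mul_comm]

lemma trace_conjT_mul_self {n : ℕ} (F : Matrix (Fin n) (Fin n) ℂ) :
    (Fᴴ * F).trace = ((∑ a, ∑ b, Complex.normSq (F a b) : ℝ) : ℂ) := by
  push_cast
  simp only [Matrix.trace, Matrix.diag, Matrix.mul_apply, Matrix.conjTranspose_apply]
  rw [Finset.sum_comm]
  exact Finset.sum_congr rfl fun a _ => Finset.sum_congr rfl fun b _ => by
    rw [Complex.star_def, Complex.normSq_eq_conj_mul_self]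

lemma eq_zero_of_trace_conjT_mul_self {n : ℕ} {F : Matrix (Fin n) (Fin n) ℂ}
    (h : (Fᴴ * F).trace = 0) : F = 0 := by
  rw [trace_conjT_mul_self] at h
  have h' : (∑ a, ∑ b, Complex.normSq (F a b) : ℝ) = 0 := by exact_mod_cast h
  ext a b
  have h2 := (Finset.sum_eq_zero_iff_of_nonneg (fun a _ => Finset.sum_nonneg
    (fun b _ => Complex.normSq_nonneg _))).1 h' a (Finset.mem_univ a)
  have h3 := (Finset.sum_eq_zero_iff_of_nonneg (fun b _ => Complex.normSq_nonneg _)).1 h2 b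
    (Finset.mem_univ b)
  simpa using Complex.normSq_eq_zero.1 h3

lemma dotc_smul_right {n : ℕ} (c : ℂ) (u v : Fin n → ℂ) : dotc u (c • v) = c * dotc u v := by
  simp [dotc_eq_sum, Finset.mul_sum, mul_left_comm]

lemma dotc_smul_left {n : ℕ} (c : ℂ) (u v : Fin n → ℂ) : dotc (c • u) v = star c * dotc u v := by
  simp [dotc_eq_sum, Finset.mul_sum, mul_assoc]

lemma dotc_sub_right {n : ℕ} (u v w : Fin n → ℂ) : dotc u (v - w) = dotc u v - dotc u w := by
  simp [dotc_eq_sum, mul_sub, Finset.sum_sub_distrib]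

lemma dotc_add_right {n : ℕ} (u v w : Fin n → ℂ) : dotc u (v + w) = dotc u v + dotc u w := by
  simp [dotc_eq_sum, mul_add, Finset.sum_add_distrib]

lemma dotc_sum_right {n : ℕ} {ι : Type*} (s : Finset ι) (u : Fin n → ℂ) (v : ι → Fin n → ℂ) :
    dotc u (∑ m ∈ s, v m) = ∑ m ∈ s, dotc u (v m) := by
  simp [dotc_eq_sum, Finset.mul_sum]
  exact Finset.sum_comm

lemma pure_mulVec {n : ℕ} (x z : Fin n → ℂ) : pureState x *ᵥ z = dotc x z • x := by
  funext i
  simp only [pureState, Matrix.mulVec, dotProduct, Matrix.of_apply, dotc_eq_sum,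
    Pi.smul_apply, smul_eq_mul, Finset.sum_mul]
  exact Finset.sum_congr rfl fun j _ => by ring

lemma dot_sum_mulVec {ι : Type*} (s : Finset ι) (M : ι → Mat d) (u v : Fin d → ℂ) :
    star u ⬝ᵥ ((∑ i ∈ s, M i) *ᵥ v) = ∑ i ∈ s, star u ⬝ᵥ (M i *ᵥ v) := by
  have : (∑ i ∈ s, M i) *ᵥ v = ∑ i ∈ s, M i *ᵥ v := by
    funext j
    simp only [Matrix.mulVec, dotProduct, Finset.sum_apply, Matrix.sum_apply,
      Finset.sum_mul]
    exact Finset.sum_comm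
  rw [this]
  simp only [dotProduct, Finset.sum_apply, Finset.mul_sum]
  exact Finset.sum_comm

lemma parallel {ι : Type*} [Fintype ι] (w : ι → Fin d → ℂ) (x : Fin d → ℂ)
    (hx : dotc x x = 1) (h : ∑ k, pureState (w k) = pureState x) :
    ∀ k, ∃ c : ℂ, w k = c • x := by
  intro k
  refine ⟨dotc x (w k), ?_⟩
  set c := dotc x (w k) with hc
  set u := w k - c • x with hu
  have hxu : dotc x u = 0 := by
    rw [hu, dotc_sub_right, dotc_smul_right, hx, mul_one, sub_self]
  have hq := congrArg (fun A => star u ⬝ᵥ (A *ᵥ u)) h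
  rw [dot_sum_mulVec] at hq
  have hterm : ∀ k', star u ⬝ᵥ (pureState (w k') *ᵥ u)
      = ((Complex.normSq (dotc (w k') u) : ℝ) : ℂ) := by
    intro k'
    rw [pure_mulVec]
    show dotc u (dotc (w k') u • w k') = _
    rw [dotc_smul_right, dotc_comm u (w k'), Complex.star_def, Complex.mul_conj]
  have hrhs : star u ⬝ᵥ (pureState x *ᵥ u) = 0 := by
    rw [pure_mulVec, hxu, zero_smul]
    simp
  rw [hrhs] at hq
  simp only [hterm] at hq
  have h0 : (∑ k', Complex.normSq (dotc (w k') u) : ℝ) = 0 := by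
    exact_mod_cast hq
  have hk : dotc (w k) u = 0 := by
    have := (Finset.sum_eq_zero_iff_of_nonneg (fun k' _ => Complex.normSq_nonneg _)).1 h0 k
      (Finset.mem_univ k)
    exact Complex.normSq_eq_zero.1 this
  have huu : dotc u u = 0 := by
    have hxw : w k = u + c • x := by rw [hu]; abel
    have : dotc u (w k) = dotc u u + c * dotc u x := by
      rw [hxw, dotc_add_right, dotc_smul_right]
    have hux : dotc u x = 0 := by rw [dotc_comm, hxu, star_zero]
    have huwk : dotc u (w k) = 0 := by rw [dotc_comm, hk, star_zero]
    rw [huwk, hux, mul_zero, add_zero] at this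
    exact this.symm
  have := dotc_self_eq_zero huu
  rw [hu] at this
  linear_combination (norm := abel) this

lemma sum_rot {α β γ : Type*} [Fintype α] [Fintype β] [Fintype γ] (f : α → β → γ → ℂ) :
    ∑ a, ∑ b, ∑ c, f a b c = ∑ b, ∑ c, ∑ a, f a b c := by
  rw [Finset.sum_comm]
  exact Finset.sum_congr rfl fun b _ => Finset.sum_comm

lemma mulVec_lin (A : Mat d) {M : ℕ} (a : Fin M → ℂ) (ψ : Fin M → Fin d → ℂ) :
    A *ᵥ (∑ m, a m • ψ m) = ∑ m, a m • (A *ᵥ ψ m) := by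
  rw [← Matrix.mulVecLin_apply, map_sum]
  simp [Matrix.mulVecLin_apply]

lemma Fmat_sum (K : Fin p → Mat d) {M : ℕ} (a b : Fin M → ℂ) (ψ : Fin M → Fin d → ℂ) :
    Fmat K (∑ m, a m • ψ m) (∑ m, b m • ψ m)
      = ∑ m, ∑ m', (a m * star (b m')) • Fmat K (ψ m) (ψ m') := by
  simp only [Fmat, mulVec_lin]
  ext e f
  simp only [Matrix.sum_apply, Matrix.smul_apply, vecMulVec_apply, Finset.sum_apply,
    Pi.smul_apply, smul_eq_mul, Pi.star_apply, star_sum, star_mul', Finset.sum_mul_sum]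
  rw [sum_rot (f := fun i m m' => a m * (K i *ᵥ ψ m) e *
    (star (b m') * star ((K i *ᵥ ψ m') f)))]
  refine Finset.sum_congr rfl fun m _ => Finset.sum_congr rfl fun m' _ => ?_
  rw [Finset.mul_sum]
  exact Finset.sum_congr rfl fun i _ => by ring

lemma mul_pure_mul_conjT (A : Mat d) (w : Fin d → ℂ) :
    A * pureState w * Aᴴ = pureState (A *ᵥ w) := by
  ext i j
  simp only [Matrix.mul_apply, pureState, Matrix.of_apply, Matrix.conjTranspose_apply,
    Matrix.mulVec, dotProduct, star_sum, star_mul', Finset.sum_mul_sum, Finset.sum_mul,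
    Finset.mul_sum]
  exact Finset.sum_congr rfl fun a _ => Finset.sum_congr rfl fun b _ => by ring

lemma pureState_hermitian {n : ℕ} (x : Fin n → ℂ) : (pureState x).IsHermitian := by
  ext i j
  simp [pureState, Matrix.conjTranspose_apply, mul_comm]

lemma pureState_posSemidef {n : ℕ} (x : Fin n → ℂ) : (pureState x).PosSemidef := by
  refine posSemidef_iff_dotProduct_mulVec.2 ⟨pureState_hermitian x, fun z => ?_⟩
  have h : star z ⬝ᵥ (pureState x *ᵥ z) = ((Complex.normSq (dotc x z) : ℝ) : ℂ) := by
    rw [pure_mulVec]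
    show dotc z (dotc x z • x) = _
    rw [dotc_smul_right, dotc_comm z x, Complex.star_def, Complex.mul_conj]
  rw [h]
  exact Complex.zero_le_real.2 (Complex.normSq_nonneg _)

lemma pureState_trace {n : ℕ} (x : Fin n → ℂ) (h : dotc x x = 1) : (pureState x).trace = 1 := by
  have : (pureState x).trace = star (dotc x x) := by
    simp [Matrix.trace, Matrix.diag, pureState, dotc_eq_sum, mul_comm]
  rw [this, h, star_one]

lemma Fmat_trace (K : Fin p → Mat d) (hTP : ∑ i, (K i)ᴴ * K i = 1) (φ ψ : Fin d → ℂ) :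
    (Fmat K φ ψ).trace = dotc ψ φ := by
  simp only [Fmat, Matrix.trace_sum]
  have h : ∀ i, (vecMulVec (K i *ᵥ φ) (star (K i *ᵥ ψ))).trace
      = dotc (K i *ᵥ ψ) (K i *ᵥ φ) := by
    intro i
    simp [Matrix.trace, Matrix.diag, vecMulVec_apply, dotc_eq_sum, mul_comm]
  simp only [h]
  exact dotc_kraus K hTP ψ φ

lemma isState_pure {n : ℕ} (x : Fin n → ℂ) (hx : dotc x x = 1) : IsState (pureState x) :=
  ⟨pureState_posSemidef x, pureState_trace x hx⟩

lemma pure_range {n : ℕ} {C : Submodule ℂ (Fin n → ℂ)} {x : Fin n → ℂ} (hx : x ∈ C) :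
    LinearMap.range (pureState x).mulVecLin ≤ C := by
  rintro w ⟨z, rfl⟩
  rw [Matrix.mulVecLin_apply, pure_mulVec]
  exact C.smul_mem _ hx

lemma kl_orth (K : Fin p → Mat d) (Φ : Module.End ℂ (Mat d))
    (hK : ∀ X, Φ X = ∑ i, K i * X * (K i)ᴴ)
    {C : Submodule ℂ (Fin d → ℂ)} (hC : Correctable Φ C)
    {x y : Fin d → ℂ} (hxC : x ∈ C) (hyC : y ∈ C)
    (hx : dotc x x = 1) (hy : dotc y y = 1) (hxy : dotc x y = 0) :
    ∀ i j, dotc (K i *ᵥ x) (K j *ᵥ y) = 0 := by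
  obtain ⟨R, ⟨q, L, hLK, hLTP⟩, hrec⟩ := hC
  have hstate : ∀ z, z ∈ C → dotc z z = 1 →
      ∑ li : Fin q × Fin p, pureState (L li.1 *ᵥ (K li.2 *ᵥ z)) = pureState z := by
    intro z hz hz1
    have h1 := hrec (pureState z) (isState_pure z hz1) (pure_range hz)
    rw [hK, hLK] at h1
    rw [Fintype.sum_prod_type]
    calc ∑ l, ∑ i, pureState (L l *ᵥ (K i *ᵥ z))
        = ∑ l, L l * (∑ i, K i * pureState z * (K i)ᴴ) * (L l)ᴴ := by
          refine Finset.sum_congr rfl fun l _ => ?_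
          rw [Matrix.mul_sum, Matrix.sum_mul]
          refine Finset.sum_congr rfl fun i _ => ?_
          rw [mul_pure_mul_conjT, mul_pure_mul_conjT]
      _ = pureState z := h1
  have hparx := parallel (fun li : Fin q × Fin p => L li.1 *ᵥ (K li.2 *ᵥ x)) x hx
    (hstate x hxC hx)
  have hpary := parallel (fun li : Fin q × Fin p => L li.1 *ᵥ (K li.2 *ᵥ y)) y hy
    (hstate y hyC hy)
  intro i j
  rw [← dotc_kraus L hLTP (K i *ᵥ x) (K j *ᵥ y)]
  refine Finset.sum_eq_zero fun l _ => ?_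
  obtain ⟨c, hc⟩ := hparx (l, i)
  obtain ⟨c', hc'⟩ := hpary (l, j)
  simp only at hc hc'
  rw [hc, hc', dotc_smul_left, dotc_smul_right, hxy, mul_zero, mul_zero]

lemma trace_FF (K : Fin p → Mat d) (u v : Fin d → ℂ) :
    (Fmat K u u * Fmat K v v).trace
      = ((∑ i, ∑ j, Complex.normSq (dotc (K i *ᵥ u) (K j *ᵥ v)) : ℝ) : ℂ) := by
  rw [trace_Fmat_mul]
  push_cast
  refine Finset.sum_congr rfl fun i _ => Finset.sum_congr rfl fun j _ => ?_
  rw [dotc_comm (K j *ᵥ v) (K i *ᵥ u), Complex.star_def, Complex.mul_conj]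

lemma trace_FF_self_pos (K : Fin p → Mat d) (hTP : ∑ i, (K i)ᴴ * K i = 1)
    (u : Fin d → ℂ) (hu : dotc u u = 1) :
    0 < ∑ i, ∑ j, Complex.normSq (dotc (K i *ᵥ u) (K j *ᵥ u)) := by
  have h1 : ∑ i, dotc (K i *ᵥ u) (K i *ᵥ u) = 1 := by rw [dotc_kraus K hTP, hu]
  have h2 : ∃ i, dotc (K i *ᵥ u) (K i *ᵥ u) ≠ 0 := by
    by_contra h
    push_neg at h
    rw [Finset.sum_eq_zero (fun i _ => h i)] at h1
    exact one_ne_zero h1.symm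
  obtain ⟨i0, hi0⟩ := h2
  have hterm : 0 < Complex.normSq (dotc (K i0 *ᵥ u) (K i0 *ᵥ u)) :=
    Complex.normSq_pos.2 hi0
  have : 0 < ∑ j, Complex.normSq (dotc (K i0 *ᵥ u) (K j *ᵥ u)) :=
    Finset.sum_pos' (fun j _ => Complex.normSq_nonneg _) ⟨i0, Finset.mem_univ _, hterm⟩
  exact Finset.sum_pos' (fun i _ => Finset.sum_nonneg fun j _ => Complex.normSq_nonneg _)
    ⟨i0, Finset.mem_univ _, this⟩

lemma Fmat_diag (K : Fin p → Mat d) {M : ℕ} (ψ : Fin M → Fin d → ℂ)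
    (hF : ∀ m m', m ≠ m' → Fmat K (ψ m) (ψ m') = 0) (a : Fin M → ℂ) :
    Fmat K (∑ m, a m • ψ m) (∑ m, a m • ψ m)
      = ∑ m, ((Complex.normSq (a m) : ℝ) : ℂ) • Fmat K (ψ m) (ψ m) := by
  rw [Fmat_sum]
  refine Finset.sum_congr rfl fun m _ => ?_
  rw [Finset.sum_eq_single m]
  · rw [Complex.star_def, Complex.mul_conj]
  · intro m' _ hne
    rw [hF m m' (Ne.symm hne), smul_zero]
  · intro h
    exact absurd (Finset.mem_univ m) h

lemma core_disjoint (K : Fin p → Mat d) (hTP : ∑ i, (K i)ᴴ * K i = 1)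
    (Φ : Module.End ℂ (Mat d)) (hK : ∀ X, Φ X = ∑ i, K i * X * (K i)ᴴ)
    {C : Submodule ℂ (Fin d → ℂ)} (hC : Correctable Φ C)
    {M : ℕ} (ψ : Fin M → Fin d → ℂ)
    (hF : ∀ m m', m ≠ m' → Fmat K (ψ m) (ψ m') = 0)
    (hψ : ∀ m, dotc (ψ m) (ψ m) = 1)
    (a b : Fin M → ℂ)
    (hxC : (∑ m, a m • ψ m) ∈ C) (hyC : (∑ m, b m • ψ m) ∈ C)
    (hx : dotc (∑ m, a m • ψ m) (∑ m, a m • ψ m) = 1)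
    (hy : dotc (∑ m, b m • ψ m) (∑ m, b m • ψ m) = 1)
    (hxy : dotc (∑ m, a m • ψ m) (∑ m, b m • ψ m) = 0) :
    ∀ m, a m = 0 ∨ b m = 0 := by
  set x := ∑ m, a m • ψ m with hxdef
  set y := ∑ m, b m • ψ m with hydef
  have hkl := kl_orth K Φ hK hC hxC hyC hx hy hxy
  have htr0 : (Fmat K x x * Fmat K y y).trace = 0 := by
    rw [trace_FF]
    have : ∀ i j, Complex.normSq (dotc (K i *ᵥ x) (K j *ᵥ y)) = 0 := by
      intro i j
      rw [hkl i j, Complex.normSq_zero]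
    simp [this]
  rw [Fmat_diag K ψ hF a, Fmat_diag K ψ hF b, Matrix.sum_mul] at htr0
  simp only [Matrix.mul_sum, Matrix.smul_mul, Matrix.mul_smul, Matrix.trace_sum,
    Matrix.trace_smul, smul_smul, trace_FF, smul_eq_mul] at htr0
  have hreal : (∑ m, ∑ m', Complex.normSq (b m') * Complex.normSq (a m) *
      (∑ i, ∑ j, Complex.normSq (dotc (K i *ᵥ ψ m) (K j *ᵥ ψ m'))) : ℝ) = 0 := by
    have := htr0
    push_cast at this ⊢
    exact_mod_cast this
  have hnn : ∀ m ∈ Finset.univ, (0:ℝ) ≤ ∑ m', Complex.normSq (b m') * Complex.normSq (a m) *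
      (∑ i, ∑ j, Complex.normSq (dotc (K i *ᵥ ψ m) (K j *ᵥ ψ m'))) := by
    intro m _
    refine Finset.sum_nonneg fun m' _ => ?_
    have := Finset.sum_nonneg (fun i (_ : i ∈ Finset.univ) => Finset.sum_nonneg
      fun j (_ : j ∈ Finset.univ) => Complex.normSq_nonneg (dotc (K i *ᵥ ψ m) (K j *ᵥ ψ m')))
    exact mul_nonneg (mul_nonneg (Complex.normSq_nonneg _) (Complex.normSq_nonneg _)) this
  intro m
  have h1 := (Finset.sum_eq_zero_iff_of_nonneg hnn).1 hreal m (Finset.mem_univ m)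
  have hnn2 : ∀ m' ∈ Finset.univ, (0:ℝ) ≤ Complex.normSq (b m') * Complex.normSq (a m) *
      (∑ i, ∑ j, Complex.normSq (dotc (K i *ᵥ ψ m) (K j *ᵥ ψ m'))) := by
    intro m' _
    have := Finset.sum_nonneg (fun i (_ : i ∈ Finset.univ) => Finset.sum_nonneg
      fun j (_ : j ∈ Finset.univ) => Complex.normSq_nonneg (dotc (K i *ᵥ ψ m) (K j *ᵥ ψ m')))
    exact mul_nonneg (mul_nonneg (Complex.normSq_nonneg _) (Complex.normSq_nonneg _)) this
  have h2 := (Finset.sum_eq_zero_iff_of_nonneg hnn2).1 h1 m (Finset.mem_univ m)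
  have hpos := trace_FF_self_pos K hTP (ψ m) (hψ m)
  by_contra hcon
  push_neg at hcon
  obtain ⟨ha, hb⟩ := hcon
  have hgt : Complex.normSq (b m) * Complex.normSq (a m) *
      (∑ i, ∑ j, Complex.normSq (dotc (K i *ᵥ ψ m) (K j *ᵥ ψ m))) > 0 :=
    mul_pos (mul_pos (Complex.normSq_pos.2 hb) (Complex.normSq_pos.2 ha)) hpos
  exact absurd h2 (ne_of_gt hgt)

lemma dotc_zero_right {n : ℕ} (u : Fin n → ℂ) : dotc u 0 = 0 := by
  simp [dotc_eq_sum]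

lemma dotc_add_left {n : ℕ} (u v w : Fin n → ℂ) : dotc (u + v) w = dotc u w + dotc v w := by
  simp [dotc_eq_sum, add_mul, Finset.sum_add_distrib]

lemma dotc_sub_left {n : ℕ} (u v w : Fin n → ℂ) : dotc (u - v) w = dotc u w - dotc v w := by
  simp [dotc_eq_sum, sub_mul, Finset.sum_sub_distrib]

lemma normalize_exists {n : ℕ} {w : Fin n → ℂ} (hw : w ≠ 0) :
    ∃ c : ℂ, c ≠ 0 ∧ dotc (c • w) (c • w) = 1 := by
  have ht : dotc w w = ((∑ i, Complex.normSq (w i) : ℝ) : ℂ) := dotc_self_nonneg_re w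
  set t : ℝ := ∑ i, Complex.normSq (w i) with htdef
  have htpos : 0 < t := by
    rcases eq_or_lt_of_le (Finset.sum_nonneg fun i (_ : i ∈ Finset.univ) =>
      Complex.normSq_nonneg (w i)) with h | h
    · exfalso
      apply hw
      funext i
      have := (Finset.sum_eq_zero_iff_of_nonneg fun i _ => Complex.normSq_nonneg (w i)).1
        h.symm i (Finset.mem_univ i)
      simpa using Complex.normSq_eq_zero.1 this
    · exact h
  refine ⟨((Real.sqrt t : ℝ) : ℂ)⁻¹, ?_, ?_⟩
  · simp only [ne_eq, inv_eq_zero, Complex.ofReal_eq_zero]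
    exact Real.sqrt_ne_zero'.2 htpos
  · rw [dotc_smul_left, dotc_smul_right, ht]
    have hst : star (((Real.sqrt t : ℝ) : ℂ))⁻¹ = (((Real.sqrt t : ℝ) : ℂ))⁻¹ := by
      simp [Complex.star_def, ← Complex.ofReal_inv, Complex.conj_ofReal]
    rw [hst, ← Complex.ofReal_inv, ← Complex.ofReal_mul, ← Complex.ofReal_mul,
      Complex.ofReal_eq_one, ← mul_assoc, ← mul_inv, Real.mul_self_sqrt htpos.le]
    exact inv_mul_cancel₀ (ne_of_gt htpos)

lemma ortho_pair {n : ℕ} (U : Submodule ℂ (Fin n → ℂ)) (hU : 2 ≤ Module.finrank ℂ U) :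
    ∃ x y, x ∈ U ∧ y ∈ U ∧ dotc x x = 1 ∧ dotc y y = 1 ∧ dotc x y = 0 := by
  let B := Module.finBasis ℂ U
  let i0 : Fin (Module.finrank ℂ U) := ⟨0, by omega⟩
  let i1 : Fin (Module.finrank ℂ U) := ⟨1, by omega⟩
  set u : Fin n → ℂ := (B i0 : Fin n → ℂ) with hu
  set v : Fin n → ℂ := (B i1 : Fin n → ℂ) with hv
  have hne : i0 ≠ i1 := by
    intro h
    exact absurd (congrArg Fin.val h) (by norm_num)
  have hindep : ∀ c : ℂ, v ≠ c • u := by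
    intro c hvc
    have hUeq : (B i1 : U) = c • (B i0) := by
      apply Subtype.ext
      rw [Submodule.coe_smul, ← hu, ← hv]
      exact hvc
    have hrep := congrArg (fun z => (B.repr z) i1) hUeq
    simp only [Module.Basis.repr_self, _root_.map_smul, Finsupp.smul_apply] at hrep
    rw [Finsupp.single_apply, Finsupp.single_apply, if_pos rfl, if_neg hne] at hrep
    simp at hrep
  have hu0 : u ≠ 0 := by
    intro h
    have : (B i0 : U) = 0 := Subtype.ext (by rw [← hu, h]; rfl)
    exact B.ne_zero i0 this
  obtain ⟨c, hc0, hcx⟩ := normalize_exists hu0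
  set x : Fin n → ℂ := c • u with hx
  have hxU : x ∈ U := U.smul_mem _ (SetLike.coe_mem (B i0))
  set w : Fin n → ℂ := v - dotc x v • x with hw
  have hwU : w ∈ U := U.sub_mem (SetLike.coe_mem (B i1)) (U.smul_mem _ hxU)
  have hxw : dotc x w = 0 := by
    rw [hw, dotc_sub_right, dotc_smul_right, hcx, mul_one, sub_self]
  have hw0 : w ≠ 0 := by
    intro h
    have h' : v - dotc x v • x = 0 := by rw [← hw]; exact h
    have hveq : v = dotc x v • x := sub_eq_zero.1 h'
    have h2 : v = (dotc x v * c) • u := by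
      conv_lhs => rw [hveq]
      rw [hx, smul_smul]
    exact hindep _ h2
  obtain ⟨c', hc'0, hc'y⟩ := normalize_exists hw0
  exact ⟨x, c' • w, hxU, U.smul_mem _ hwU, hcx, hc'y, by rw [dotc_smul_right, hxw, mul_zero]⟩

lemma code_F_zero (K : Fin p → Mat d) {M : ℕ} (ψ : Fin M → Fin d → ℂ)
    (horth : ∀ m m', m ≠ m' →
      (compChannel K (pureState (ψ m)) * compChannel K (pureState (ψ m'))).trace = 0) :
    ∀ m m', m ≠ m' → Fmat K (ψ m) (ψ m') = 0 := by
  intro m m' hne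
  have h := horth m' m (Ne.symm hne)
  rw [comp_trace_eq] at h
  rw [← Fmat_conjTranspose K (ψ m) (ψ m')] at h
  exact eq_zero_of_trace_conjT_mul_self h

lemma orthonormal_li {n M : ℕ} (ψ : Fin M → Fin n → ℂ) (h1 : ∀ m, dotc (ψ m) (ψ m) = 1)
    (h2 : ∀ m m', m ≠ m' → dotc (ψ m) (ψ m') = 0) : LinearIndependent ℂ ψ := by
  rw [Fintype.linearIndependent_iff]
  intro g hg k
  have h := congrArg (dotc (ψ k)) hg
  rw [dotc_sum_right, dotc_zero_right] at h
  simp only [dotc_smul_right] at h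
  rw [Finset.sum_eq_single k] at h
  · rw [h1 k, mul_one] at h
    exact h
  · intro m _ hmk
    rw [h2 k m (Ne.symm hmk), mul_zero]
  · intro hk
    exact absurd (Finset.mem_univ k) hk

lemma key (K : Fin p → Mat d) (hTP : ∑ i, (K i)ᴴ * K i = 1)
    (Φ : Module.End ℂ (Mat d)) (hK : ∀ X, Φ X = ∑ i, K i * X * (K i)ᴴ)
    {M : ℕ} (ψ : Fin M → Fin d → ℂ) (hunit : ∀ m, IsUnitVec (ψ m))
    (horth : ∀ m m', m ≠ m' →
      (compChannel K (pureState (ψ m)) * compChannel K (pureState (ψ m'))).trace = 0)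
    {C : Submodule ℂ (Fin d → ℂ)} (hC : Correctable Φ C) :
    M + Module.finrank ℂ C ≤ d + 1 := by
  by_contra hcon
  push_neg at hcon
  have hψu : ∀ m, dotc (ψ m) (ψ m) = 1 := fun m => hunit m
  have hF : ∀ m m', m ≠ m' → Fmat K (ψ m) (ψ m') = 0 := code_F_zero K ψ horth
  have hON : ∀ m m', m ≠ m' → dotc (ψ m) (ψ m') = 0 := by
    intro m m' hne
    have h0 := hF m' m (Ne.symm hne)
    have := Fmat_trace K hTP (ψ m') (ψ m)
    rw [h0] at this
    simpa using this.symm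
  have hli := orthonormal_li ψ hψu hON
  set W := Submodule.span ℂ (Set.range ψ) with hWdef
  have hWrank : Module.finrank ℂ W = M := by
    rw [hWdef, finrank_span_eq_card hli, Fintype.card_fin]
  have hsum := Submodule.finrank_sup_add_finrank_inf_eq W C
  have hle : Module.finrank ℂ ↥(W ⊔ C) ≤ d := by
    have h := Submodule.finrank_le (W ⊔ C)
    rwa [Module.finrank_fin_fun] at h
  have hint : 2 ≤ Module.finrank ℂ ↥(W ⊓ C) := by omega
  obtain ⟨x, y, hxU, hyU, hx1, hy1, hxy⟩ := ortho_pair (W ⊓ C) hint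
  have hyx : dotc y x = 0 := by rw [dotc_comm, hxy, star_zero]
  obtain ⟨a, ha⟩ := (Submodule.mem_span_range_iff_exists_fun ℂ).1 (Submodule.mem_inf.1 hxU).1
  obtain ⟨b, hb⟩ := (Submodule.mem_span_range_iff_exists_fun ℂ).1 (Submodule.mem_inf.1 hyU).1
  have hxC := (Submodule.mem_inf.1 hxU).2
  have hyC := (Submodule.mem_inf.1 hyU).2
  have hd1 : ∀ m, a m = 0 ∨ b m = 0 := by
    rw [← ha] at hxC hx1 hxy
    rw [← hb] at hyC hy1 hxy
    exact core_disjoint K hTP Φ hK hC ψ hF hψu a b hxC hyC hx1 hy1 hxy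
  set c2 : ℂ := ((Real.sqrt 2 : ℝ) : ℂ)⁻¹ with hc2def
  have hc2star : star c2 = c2 := by
    simp [hc2def, Complex.star_def, ← Complex.ofReal_inv, Complex.conj_ofReal]
  have hc2ne : c2 ≠ 0 := by
    simp only [hc2def, ne_eq, inv_eq_zero, Complex.ofReal_eq_zero]
    exact Real.sqrt_ne_zero'.2 (by norm_num)
  have hc2sq : c2 * c2 = ((2:ℝ)⁻¹ : ℂ) := by
    rw [hc2def, ← Complex.ofReal_inv, ← Complex.ofReal_mul, ← mul_inv,
      Real.mul_self_sqrt (by norm_num)]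
    norm_num
  have hpp : dotc (x + y) (x + y) = 2 := by
    rw [dotc_add_left, dotc_add_right, dotc_add_right, hx1, hy1, hxy, hyx]; norm_num
  have hmm : dotc (x - y) (x - y) = 2 := by
    rw [dotc_sub_left, dotc_sub_right, dotc_sub_right, hx1, hy1, hxy, hyx]; norm_num
  have hpm : dotc (x + y) (x - y) = 0 := by
    rw [dotc_add_left, dotc_sub_right, dotc_sub_right, hx1, hy1, hxy, hyx]; norm_num
  have hsm : ∀ (z w : Fin d → ℂ), dotc z w = 2 → dotc (c2 • z) (c2 • w) = 1 := by
    intro z w hzw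
    rw [dotc_smul_left, dotc_smul_right, hzw, hc2star, ← mul_assoc, hc2sq]
    push_cast
    norm_num
  have hsm0 : ∀ (z w : Fin d → ℂ), dotc z w = 0 → dotc (c2 • z) (c2 • w) = 0 := by
    intro z w hzw
    rw [dotc_smul_left, dotc_smul_right, hzw]
    ring
  have hrepP : ∑ m, (c2 * (a m + b m)) • ψ m = c2 • (x + y) := by
    rw [← ha, ← hb, ← Finset.sum_add_distrib, Finset.smul_sum]
    refine Finset.sum_congr rfl fun m _ => ?_
    rw [← add_smul, smul_smul]
  have hrepM : ∑ m, (c2 * (a m - b m)) • ψ m = c2 • (x - y) := by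
    rw [← ha, ← hb, ← Finset.sum_sub_distrib, Finset.smul_sum]
    refine Finset.sum_congr rfl fun m _ => ?_
    rw [← sub_smul, smul_smul]
  have hPC : c2 • (x + y) ∈ C := C.smul_mem _ (C.add_mem hxC hyC)
  have hMC : c2 • (x - y) ∈ C := C.smul_mem _ (C.sub_mem hxC hyC)
  have hd2 := core_disjoint K hTP Φ hK hC ψ hF hψu (fun m => c2 * (a m + b m))
    (fun m => c2 * (a m - b m))
    (by rw [hrepP]; exact hPC) (by rw [hrepM]; exact hMC)
    (by rw [hrepP]; exact hsm _ _ hpp) (by rw [hrepM]; exact hsm _ _ hmm)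
    (by rw [hrepP, hrepM]; exact hsm0 _ _ hpm)
  have hall : ∀ m, a m = 0 := by
    intro m
    rcases hd1 m with h | h
    · exact h
    · rcases hd2 m with h2 | h2
      · have h3 := (mul_eq_zero.1 h2).resolve_left hc2ne
        rw [h, add_zero] at h3
        exact h3
      · have h3 := (mul_eq_zero.1 h2).resolve_left hc2ne
        rw [h, sub_zero] at h3
        exact h3
  have hx0 : x = 0 := by
    rw [← ha]
    exact Finset.sum_eq_zero fun m _ => by rw [hall m, zero_smul]
  have hfin := hx1
  rw [hx0, dotc_zero_right] at hfin
  exact one_ne_zero hfin.symm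

lemma correctable_bot (Φ : Module.End ℂ (Mat d)) : Correctable Φ (⊥ : Submodule ℂ (Fin d → ℂ)) := by
  refine ⟨LinearMap.id, ⟨1, fun _ => 1, fun X => by simp, by simp⟩, ?_⟩
  intro ρ hρ hrange
  exfalso
  have hzero : ρ = 0 := by
    ext i j
    have h := hrange (LinearMap.mem_range_self _ (Pi.single j 1))
    rw [Submodule.mem_bot, Matrix.mulVecLin_apply] at h
    have h2 := congrFun h i
    simpa [Matrix.mulVec_single] using h2
  rw [hzero] at hρ
  have h1 := hρ.2
  simp [Matrix.trace] at h1

end CapAux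

/-- Trade-off relation: the one-shot zero-error classical capacity of
the complementary channel and the one-shot zero-error quantum capacity of the channel
satisfy `M(Φ^C) + D(Φ) ≤ d + 1`. -/
theorem capacity_tradeoff (d p : ℕ) (K : Fin p → Mat d) (hind : LinearIndependent ℂ K)
    (Φ : Module.End ℂ (Mat d))
    (hK : ∀ X, Φ X = ∑ i, K i * X * (K i)ᴴ) (hTP : ∑ i, (K i)ᴴ * K i = 1) :
    sSup {M : ℕ | ∃ ψ : Fin M → Fin d → ℂ, (∀ m, IsUnitVec (ψ m)) ∧
        ∀ m m', m ≠ m' →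
          (compChannel K (pureState (ψ m)) * compChannel K (pureState (ψ m'))).trace = 0} +
      Dquantum Φ ≤ d + 1 := by
  classical
  set S₁ : Set ℕ := {M : ℕ | ∃ ψ : Fin M → Fin d → ℂ, (∀ m, IsUnitVec (ψ m)) ∧
    ∀ m m', m ≠ m' →
      (compChannel K (pureState (ψ m)) * compChannel K (pureState (ψ m'))).trace = 0} with hS₁
  set S₂ : Set ℕ := {M : ℕ | ∃ C : Submodule ℂ (Fin d → ℂ), Correctable Φ C ∧
    Module.finrank ℂ C = M} with hS₂
  have hne1 : S₁.Nonempty := ⟨0, Fin.elim0, fun m => m.elim0, fun m => m.elim0⟩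
  have hne2 : S₂.Nonempty := ⟨0, ⊥, CapAux.correctable_bot Φ, by simp⟩
  have hbdd1 : BddAbove S₁ := by
    refine ⟨d + 1, fun M hM => ?_⟩
    obtain ⟨ψ, hψ, horth⟩ := hM
    have h := CapAux.key K hTP Φ hK ψ hψ horth (CapAux.correctable_bot Φ)
    simpa using h
  have hbdd2 : BddAbove S₂ := by
    refine ⟨d, fun M hM => ?_⟩
    obtain ⟨C, _, hCrank⟩ := hM
    rw [← hCrank]
    have h := Submodule.finrank_le C
    rwa [Module.finrank_fin_fun] at h
  obtain ⟨ψ, hψ, horth⟩ := Nat.sSup_mem hne1 hbdd1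
  obtain ⟨C, hCcor, hCrank⟩ := Nat.sSup_mem hne2 hbdd2
  have hkey := CapAux.key K hTP Φ hK ψ hψ horth hCcor
  show sSup S₁ + sSup S₂ ≤ d + 1
  rw [← hCrank]
  exact hkey
end
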